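/- arXiv:1407.7603 — 4 statements merged into one kernel-verified Lean document; each statement's English description precedes it below -/
import Mathlib

section
/- Let H be a separable real Hilbert space, let ν be a finite Borel measure on H with ν({0}) = 0, and for t > 0 let μ_t := e^{−t ν(H)} Σ_{n=0}^∞ (t^n/n!) ν^{*n} be the compound Poisson measure with jump measure ν (ν^{*n} denoting the n-fold convolution power, ν^{*0} = δ_0), and let P_t f(x) := ∫_H f(x+y) μ_t(dy) for bounded Borel measurable f : H → ℝ. Then for every t > 0, every bounded Borel measurable f : H → ℝ and every x ∈ H, ∫_H |P_t f(x+y) − P_t f(x)|² ν(dy) ≤ (1/t) · P_t(f²)(x). -/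
open MeasureTheory

/-- The `n`-fold convolution power of a measure (`ν^{*0} = δ₀`). -/
noncomputable def convPow {H : Type*} [AddMonoid H] [MeasurableSpace H]
    (ν : Measure H) : ℕ → Measure H
  | 0 => Measure.dirac 0
  | n + 1 => (convPow ν n).conv ν

/-- The compound Poisson measure `μ_t = e^{-t ν(H)} ∑ₙ (tⁿ/n!) ν^{*n}`. -/
noncomputable def compoundPoisson {H : Type*} [AddMonoid H] [MeasurableSpace H]
    (ν : Measure H) (t : ℝ) : Measure H :=
  ENNReal.ofReal (Real.exp (-t * (ν Set.univ).toReal)) •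
    Measure.sum (fun n => ENNReal.ofReal (t ^ n / n.factorial) • convPow ν n)

/-- The transition semigroup of a compound Poisson process:
`P_t f (x) = ∫_H f(x+y) μ_t(dy)`. -/
noncomputable def cpSemigroup {H : Type*} [AddMonoid H] [MeasurableSpace H]
    (ν : Measure H) (t : ℝ) (f : H → ℝ) (x : H) : ℝ :=
  ∫ y, f (x + y) ∂(compoundPoisson ν t)

open scoped ENNReal NNReal

section PrelimAux

instance {α β : Type*} [MeasurableSpace α] [MeasurableSpace β] [AddMonoid α] [AddMonoid β]
    [MeasurableAdd₂ α] [MeasurableAdd₂ β] : MeasurableAdd₂ (α × β) :=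
  ⟨((measurable_add.comp ((measurable_fst.fst).prodMk (measurable_snd.fst)))).prodMk
    ((measurable_add.comp ((measurable_fst.snd).prodMk (measurable_snd.snd))))⟩

section Aux
variable {α : Type*} [MeasurableSpace α] [AddMonoid α]

omit [AddMonoid α] in
lemma integrable_bdd {μ : Measure α} [IsFiniteMeasure μ] {φ : α → ℝ}
    (hφ : AEStronglyMeasurable φ μ) {C : ℝ} (h : ∀ᵐ a ∂μ, |φ a| ≤ C) : Integrable φ μ :=
  ⟨hφ, HasFiniteIntegral.of_bounded (C := C) (by simpa [Real.norm_eq_abs] using h)⟩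

instance convPow_finite (ν : Measure α) [IsFiniteMeasure ν] : ∀ n, IsFiniteMeasure (convPow ν n)
  | 0 => by rw [convPow]; infer_instance
  | n + 1 => by
      rw [convPow]
      have := convPow_finite ν n
      infer_instance

variable [MeasurableAdd₂ α]

lemma conv_univ (μ τ : Measure α) [SFinite μ] [SFinite τ] :
    (μ.conv τ) Set.univ = μ Set.univ * τ Set.univ := by
  rw [Measure.conv, Measure.map_apply measurable_add MeasurableSet.univ,
    Set.preimage_univ, ← Set.univ_prod_univ, Measure.prod_prod]

lemma convPow_univ (ν : Measure α) [IsFiniteMeasure ν] :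
    ∀ n, (convPow ν n) Set.univ = (ν Set.univ) ^ n
  | 0 => by simp [convPow]
  | n + 1 => by
      rw [convPow, conv_univ, convPow_univ ν n, pow_succ]

lemma integral_conv {μ τ : Measure α} [IsFiniteMeasure μ] [IsFiniteMeasure τ]
    {ψ : α → ℝ} (hψ : Measurable ψ) {C : ℝ} (hb : ∀ᵐ z ∂(μ.conv τ), |ψ z| ≤ C) :
    ∫ z, ψ z ∂(μ.conv τ) = ∫ a, ∫ b, ψ (a + b) ∂τ ∂μ := by
  have hset : MeasurableSet {z : α | |ψ z| ≤ C} := measurableSet_le hψ.abs measurable_const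
  have hb' : ∀ᵐ p ∂(μ.prod τ), |ψ (p.1 + p.2)| ≤ C := by
    rw [Measure.conv] at hb
    exact (ae_map_iff measurable_add.aemeasurable hset).mp hb
  have hint : Integrable (fun p : α × α => ψ (p.1 + p.2)) (μ.prod τ) :=
    integrable_bdd ((hψ.comp measurable_add).aestronglyMeasurable) hb'
  rw [Measure.conv, integral_map measurable_add.aemeasurable hψ.aestronglyMeasurable,
    integral_prod _ hint]

lemma ae_conv {μ τ : Measure α} [SFinite μ] [SFinite τ] {P Q R : α → Prop}
    (hR : MeasurableSet {z | R z}) (hP : ∀ᵐ a ∂μ, P a) (hQ : ∀ᵐ b ∂τ, Q b)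
    (h : ∀ a b, P a → Q b → R (a + b)) : ∀ᵐ z ∂(μ.conv τ), R z := by
  have hRc : MeasurableSet {a | ¬ R a} := hR.compl
  rw [Measure.conv, ae_iff, Measure.map_apply measurable_add hRc]
  refine measure_mono_null (t := ({a | ¬ P a} ×ˢ Set.univ) ∪ (Set.univ ×ˢ {b | ¬ Q b})) ?_ ?_
  · rintro ⟨a, b⟩ hab
    simp only [Set.mem_preimage, Set.mem_setOf_eq] at hab
    by_cases hpa : P a
    · by_cases hqb : Q b
      · exact absurd (h a b hpa hqb) hab
      · exact Or.inr (by simp [hqb])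
    · exact Or.inl (by simp [hpa])
  · refine measure_union_null ?_ ?_ <;> rw [Measure.prod_prod]
    · rw [ae_iff] at hP; rw [hP]; simp
    · rw [ae_iff] at hQ; rw [hQ]; simp

end Aux

lemma meas_param {α β : Type*} [MeasurableSpace α] [MeasurableSpace β] (μ : Measure β) [SFinite μ]
    {F : α × β → ℝ} (hF : Measurable F) : Measurable fun a => ∫ b, F (a, b) ∂μ :=
  (hF.stronglyMeasurable.integral_prod_right').measurable
section Engine
variable {α : Type*} [MeasurableSpace α] [AddCommMonoid α] [MeasurableAdd₂ α]
variable (ν : Measure α) [IsFiniteMeasure ν] (g : α → ℝ)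

/-- The lift of `ν` under `y ↦ (y, g y)`. -/
noncomputable def gLift : Measure (α × ℝ) := Measure.map (fun y => (y, g y)) ν

instance : IsFiniteMeasure (gLift ν g) := by unfold gLift; infer_instance

variable {g}

lemma measurable_gLiftFun (hg : Measurable g) : Measurable fun y : α => (y, g y) :=
  measurable_id.prodMk hg

lemma gLift_univ (hg : Measurable g) : gLift ν g Set.univ = ν Set.univ := by
  rw [gLift, Measure.map_apply (measurable_gLiftFun hg) MeasurableSet.univ, Set.preimage_univ]

lemma integral_gLift (hg : Measurable g) {ψ : α × ℝ → ℝ} (hψ : Measurable ψ) :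
    ∫ q, ψ q ∂(gLift ν g) = ∫ y, ψ (y, g y) ∂ν := by
  rw [gLift, integral_map (measurable_gLiftFun hg).aemeasurable hψ.aestronglyMeasurable]

lemma ae_snd_convPow (hg : Measurable g) {B : ℝ} (hgB : ∀ y, |g y| ≤ B) :
    ∀ n : ℕ, ∀ᵐ p ∂(convPow (gLift ν g) n), |p.2| ≤ n * B := by
  intro n
  induction n with
  | zero =>
    rw [convPow, ae_iff]
    have hms : MeasurableSet {p : α × ℝ | ¬ |p.2| ≤ (0 : ℕ) * B} :=
      (measurableSet_le measurable_snd.abs measurable_const).compl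
    rw [Measure.dirac_apply' _ hms]
    simp
  | succ n ih =>
    rw [convPow]
    refine ae_conv (P := fun p : α × ℝ => |p.2| ≤ (n : ℕ) * B) (Q := fun q : α × ℝ => |q.2| ≤ B)
      (R := fun p : α × ℝ => |p.2| ≤ (n + 1 : ℕ) * B)
      (measurableSet_le measurable_snd.abs measurable_const) ih ?_ ?_
    · rw [gLift]
      rw [ae_map_iff (measurable_gLiftFun hg).aemeasurable
        (measurableSet_le measurable_snd.abs measurable_const : MeasurableSet {q : α × ℝ | |q.2| ≤ B})]
      exact ae_of_all _ fun y => by simpa using hgB y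
    · intro a b ha hb
      have h2 : (a + b).2 = a.2 + b.2 := rfl
      rw [h2]
      calc |a.2 + b.2| ≤ |a.2| + |b.2| := abs_add_le _ _
        _ ≤ (n : ℕ) * B + B := add_le_add ha hb
        _ = (n + 1 : ℕ) * B := by push_cast; ring

omit [MeasurableSpace α] [MeasurableAdd₂ α] in
lemma adm_bound_nonneg {ψ : α × ℝ → ℝ} {D : ℝ} (hψb : ∀ p, |ψ p| ≤ D * (1 + p.2 ^ 2)) :
    0 ≤ D := by
  have := hψb 0
  have h0 : ((0 : α × ℝ)).2 = 0 := rfl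
  rw [h0] at this
  nlinarith [abs_nonneg (ψ 0)]

lemma ae_adm_convPow (hg : Measurable g) {B : ℝ} (hgB : ∀ y, |g y| ≤ B)
    {ψ : α × ℝ → ℝ} {D : ℝ} (hψb : ∀ p, |ψ p| ≤ D * (1 + p.2 ^ 2)) (n : ℕ) :
    ∀ᵐ p ∂(convPow (gLift ν g) n), |ψ p| ≤ D * (1 + ((n : ℝ) * B) ^ 2) := by
  filter_upwards [ae_snd_convPow ν hg hgB n] with p hp
  refine le_trans (hψb p) (mul_le_mul_of_nonneg_left ?_ (adm_bound_nonneg hψb))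
  have : p.2 ^ 2 ≤ ((n : ℝ) * B) ^ 2 := by
    rw [← sq_abs p.2]
    exact pow_le_pow_left₀ (abs_nonneg _) hp 2
  linarith

lemma integrable_adm (hg : Measurable g) {B : ℝ} (hgB : ∀ y, |g y| ≤ B)
    {ψ : α × ℝ → ℝ} (hψ : Measurable ψ) {D : ℝ} (hψb : ∀ p, |ψ p| ≤ D * (1 + p.2 ^ 2)) (n : ℕ) :
    Integrable ψ (convPow (gLift ν g) n) :=
  integrable_bdd hψ.aestronglyMeasurable (ae_adm_convPow ν hg hgB hψb n)

lemma recE (hg : Measurable g) {B : ℝ} (hgB : ∀ y, |g y| ≤ B)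
    {ψ : α × ℝ → ℝ} (hψ : Measurable ψ) {D : ℝ} (hψb : ∀ p, |ψ p| ≤ D * (1 + p.2 ^ 2)) (n : ℕ) :
    ∫ p, ψ p ∂(convPow (gLift ν g) (n + 1)) =
      ∫ p, (∫ y, ψ (p + (y, g y)) ∂ν) ∂(convPow (gLift ν g) n) := by
  have hae : ∀ᵐ z ∂((convPow (gLift ν g) n).conv (gLift ν g)), |ψ z| ≤ D * (1 + (((n + 1 : ℕ) : ℝ) * B) ^ 2) := by
    have := ae_adm_convPow ν hg hgB hψb (n + 1)
    rwa [convPow] at this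
  rw [convPow, integral_conv hψ hae]
  refine integral_congr_ae (ae_of_all _ fun p => ?_)
  exact integral_gLift ν hg (ψ := fun b => ψ (p + b)) (hψ.comp (measurable_const.add measurable_id))

lemma habs_adm : ∀ p : α × ℝ, |p.2| ≤ 1 * (1 + p.2 ^ 2) := fun p => by
  nlinarith [sq_nonneg (|p.2| - 1), sq_abs p.2, abs_nonneg p.2]

lemma hsq_adm : ∀ p : α × ℝ, |p.2 ^ 2| ≤ 1 * (1 + p.2 ^ 2) := fun p => by
  rw [abs_of_nonneg (sq_nonneg _)]; nlinarith [sq_nonneg p.2]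

lemma convPow_gLift_mass (hg : Measurable g) (n : ℕ) :
    ((convPow (gLift ν g) n) Set.univ).toReal = ((ν Set.univ).toReal) ^ n := by
  rw [convPow_univ, gLift_univ ν hg, ENNReal.toReal_pow]

lemma momZ0 : ∫ p, p.2 ∂(convPow (gLift ν g) 0) = 0 := by
  rw [convPow, integral_dirac' _ _ (by exact measurable_snd.stronglyMeasurable)]
  rfl

lemma momB0 : ∫ p, p.2 ^ 2 ∂(convPow (gLift ν g) 0) = 0 := by
  rw [convPow, integral_dirac' _ _ (by exact (measurable_snd.pow_const 2).stronglyMeasurable)]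
  norm_num

variable {B : ℝ}

lemma momZrec (hg : Measurable g) (hgB : ∀ y, |g y| ≤ B) (n : ℕ) :
    ∫ p, p.2 ∂(convPow (gLift ν g) (n + 1)) =
      (ν Set.univ).toReal * (∫ p, p.2 ∂(convPow (gLift ν g) n)) +
        (∫ y, g y ∂ν) * ((ν Set.univ).toReal) ^ n := by
  have hgInt : Integrable g ν := integrable_bdd hg.aestronglyMeasurable (ae_of_all _ hgB)
  rw [recE ν hg hgB (ψ := fun p : α × ℝ => p.2) (by exact measurable_snd) habs_adm n]
  have hinner : ∀ p : α × ℝ, (∫ y, (p + (y, g y)).2 ∂ν) =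
      (ν Set.univ).toReal * p.2 + ∫ y, g y ∂ν := by
    intro p
    have h1 : ∀ y, (p + (y, g y)).2 = p.2 + g y := fun _ => rfl
    simp_rw [h1]
    rw [integral_add (integrable_const _) hgInt, integral_const, smul_eq_mul, measureReal_def]
  simp_rw [hinner]
  rw [integral_add ((integrable_adm ν hg hgB (by exact measurable_snd) habs_adm n).const_mul _)
    (integrable_const _), integral_const_mul, integral_const, smul_eq_mul, measureReal_def,
    convPow_gLift_mass ν hg]
  ring

lemma momZ (hg : Measurable g) (hgB : ∀ y, |g y| ≤ B) (n : ℕ) :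
    ∫ p, p.2 ∂(convPow (gLift ν g) (n + 1)) =
      (n + 1 : ℝ) * (∫ y, g y ∂ν) * ((ν Set.univ).toReal) ^ n := by
  induction n with
  | zero => rw [momZrec ν hg hgB 0, momZ0]; push_cast; ring
  | succ n ih => rw [momZrec ν hg hgB (n + 1), ih]; push_cast; ring

lemma momBrec (hg : Measurable g) (hgB : ∀ y, |g y| ≤ B) (n : ℕ) :
    ∫ p, p.2 ^ 2 ∂(convPow (gLift ν g) (n + 1)) =
      (ν Set.univ).toReal * (∫ p, p.2 ^ 2 ∂(convPow (gLift ν g) n)) +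
        2 * (∫ y, g y ∂ν) * (∫ p, p.2 ∂(convPow (gLift ν g) n)) +
        (∫ y, g y ^ 2 ∂ν) * ((ν Set.univ).toReal) ^ n := by
  have hgInt : Integrable g ν := integrable_bdd hg.aestronglyMeasurable (ae_of_all _ hgB)
  have hg2Int : Integrable (fun y => g y ^ 2) ν := by
    refine integrable_bdd ((hg.pow_const 2).aestronglyMeasurable) (C := B ^ 2)
      (ae_of_all _ fun y => ?_)
    rw [abs_of_nonneg (sq_nonneg _), ← sq_abs]
    exact pow_le_pow_left₀ (abs_nonneg _) (hgB y) 2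
  rw [recE ν hg hgB (ψ := fun p : α × ℝ => p.2 ^ 2) (by exact measurable_snd.pow_const 2)
    hsq_adm n]
  have hinner : ∀ p : α × ℝ, (∫ y, (p + (y, g y)).2 ^ 2 ∂ν) =
      (ν Set.univ).toReal * p.2 ^ 2 + (2 * p.2) * (∫ y, g y ∂ν) + ∫ y, g y ^ 2 ∂ν := by
    intro p
    have h1 : ∀ y, (p + (y, g y)).2 ^ 2 = (p.2 ^ 2 + (2 * p.2) * g y) + g y ^ 2 := fun y => by
      have : (p + (y, g y)).2 = p.2 + g y := rfl
      rw [this]; ring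
    simp_rw [h1]
    have hIa : Integrable (fun y => p.2 ^ 2 + 2 * p.2 * g y) ν :=
      (integrable_const _).add (hgInt.const_mul _)
    rw [integral_add hIa hg2Int, integral_add (integrable_const _) (hgInt.const_mul _),
      integral_const, smul_eq_mul, measureReal_def, integral_const_mul]
  simp_rw [hinner]
  have hI1 : Integrable (fun p : α × ℝ => (ν Set.univ).toReal * p.2 ^ 2)
      (convPow (gLift ν g) n) :=
    (integrable_adm ν hg hgB (by exact measurable_snd.pow_const 2) hsq_adm n).const_mul _
  have hI2 : Integrable (fun p : α × ℝ => 2 * p.2 * ∫ y, g y ∂ν)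
      (convPow (gLift ν g) n) :=
    ((integrable_adm ν hg hgB (by exact measurable_snd) habs_adm n).const_mul 2).mul_const _
  have hI12 : Integrable
      (fun p : α × ℝ => (ν Set.univ).toReal * p.2 ^ 2 + 2 * p.2 * ∫ y, g y ∂ν)
      (convPow (gLift ν g) n) := hI1.add hI2
  rw [integral_add hI12 (integrable_const _), integral_add hI1 hI2, integral_const_mul,
    integral_mul_const, integral_const_mul, integral_const, smul_eq_mul, measureReal_def, convPow_gLift_mass ν hg]
  ring

lemma momB1 (hg : Measurable g) (hgB : ∀ y, |g y| ≤ B) :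
    ∫ p, p.2 ^ 2 ∂(convPow (gLift ν g) 1) = ∫ y, g y ^ 2 ∂ν := by
  rw [momBrec ν hg hgB 0, momB0, momZ0]
  simp

lemma momB (hg : Measurable g) (hgB : ∀ y, |g y| ≤ B) (n : ℕ) :
    ∫ p, p.2 ^ 2 ∂(convPow (gLift ν g) (n + 2)) =
      (n + 2 : ℝ) * (∫ y, g y ^ 2 ∂ν) * ((ν Set.univ).toReal) ^ (n + 1) +
        (n + 2 : ℝ) * (n + 1 : ℝ) * (∫ y, g y ∂ν) ^ 2 * ((ν Set.univ).toReal) ^ n := by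
  induction n with
  | zero =>
    rw [momBrec ν hg hgB 1, momB1 ν hg hgB, momZ ν hg hgB 0]
    push_cast; ring
  | succ n ih =>
    rw [momBrec ν hg hgB (n + 2), ih, momZ ν hg hgB (n + 1)]
    push_cast; ring

lemma marg (hg : Measurable g) (hgB : ∀ y, |g y| ≤ B) :
    ∀ (n : ℕ) (φ : α → ℝ) (C : ℝ), Measurable φ → (∀ z, |φ z| ≤ C) →
      ∫ p, φ p.1 ∂(convPow (gLift ν g) n) = ∫ z, φ z ∂(convPow ν n) := by
  intro n
  induction n with
  | zero =>
    intro φ C hφ hC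
    rw [convPow, convPow, integral_dirac' _ _ (by exact (hφ.comp measurable_fst).stronglyMeasurable),
      integral_dirac' _ _ hφ.stronglyMeasurable]
    rfl
  | succ n ih =>
    intro φ C hφ hC
    have hC0 : 0 ≤ C := le_trans (abs_nonneg _) (hC 0)
    have hφ' : Measurable fun z : α => ∫ y, φ (z + y) ∂ν :=
      meas_param ν (F := fun q : α × α => φ (q.1 + q.2)) (hφ.comp measurable_add)
    have hφ'b : ∀ z, |∫ y, φ (z + y) ∂ν| ≤ C * (ν Set.univ).toReal := fun z => by
      have := norm_integral_le_of_norm_le_const (μ := ν) (f := fun y => φ (z + y)) (C := C)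
        (ae_of_all _ fun y => by rw [Real.norm_eq_abs]; exact hC _)
      rwa [Real.norm_eq_abs] at this
    rw [recE ν hg hgB (ψ := fun p : α × ℝ => φ p.1) (by exact hφ.comp measurable_fst)
      (D := C) (fun p => le_trans (hC _) (by nlinarith [sq_nonneg p.2])) n]
    have h1 : ∀ p : α × ℝ, (∫ y, φ ((p + (y, g y)).1) ∂ν) = ∫ y, φ (p.1 + y) ∂ν := fun p => rfl
    simp_rw [h1]
    rw [ih (fun z => ∫ y, φ (z + y) ∂ν) (C * (ν Set.univ).toReal) hφ' hφ'b]
    rw [show convPow ν (n + 1) = (convPow ν n).conv ν from by rw [convPow],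
      integral_conv hφ (ae_of_all _ fun z => hC z)]

lemma delta (hg : Measurable g) (hgB : ∀ y, |g y| ≤ B) :
    ∀ (n : ℕ) (f : α → ℝ) (C : ℝ), Measurable f → (∀ z, |f z| ≤ C) → ∀ w : α,
      ∫ p, f (w + p.1) * p.2 ∂(convPow (gLift ν g) (n + 1)) =
        (n + 1 : ℝ) * ∫ y, g y * (∫ z, f (w + y + z) ∂(convPow ν n)) ∂ν := by
  have hB0 : 0 ≤ B := le_trans (abs_nonneg _) (hgB 0)
  intro n
  induction n with
  | zero =>
    intro f C hf hC w
    have h1 : convPow (gLift ν g) 1 = gLift ν g := by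
      rw [convPow, convPow, Measure.dirac_zero_conv]
    rw [h1, integral_gLift ν hg (ψ := fun p : α × ℝ => f (w + p.1) * p.2)
      (by exact (hf.comp (measurable_const.add measurable_fst)).mul measurable_snd)]
    have h2 : ∀ y : α, (∫ z, f (w + y + z) ∂(convPow ν 0)) = f (w + y) := fun y => by
      rw [convPow, integral_dirac' _ _
        (by exact (hf.comp (measurable_const.add measurable_id)).stronglyMeasurable), add_zero]
    simp only [Nat.cast_zero, zero_add, one_mul]
    refine integral_congr_ae (ae_of_all _ fun y => ?_)
    show f (w + y) * g y = g y * ∫ z, f (w + y + z) ∂(convPow ν 0)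
    rw [h2 y, mul_comm]
  | succ n ih =>
    intro f C hf hC w
    have hC0 : 0 ≤ C := le_trans (abs_nonneg _) (hC 0)
    have habs1 : ∀ m : ℝ, |m| ≤ 1 + m ^ 2 := fun m => by
      nlinarith [sq_nonneg (|m| - 1), sq_abs m]
    have hF1m : Measurable fun u : α => ∫ y, f (u + y) ∂ν :=
      meas_param ν (F := fun q : α × α => f (q.1 + q.2)) (hf.comp measurable_add)
    have hF1b : ∀ u, |∫ y, f (u + y) ∂ν| ≤ C * (ν Set.univ).toReal := fun u => by
      have := norm_integral_le_of_norm_le_const (μ := ν) (f := fun y => f (u + y)) (C := C)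
        (ae_of_all _ fun y => by rw [Real.norm_eq_abs]; exact hC _)
      rwa [Real.norm_eq_abs] at this
    have hκm : Measurable fun u : α => ∫ y, f (u + y) * g y ∂ν :=
      meas_param ν (F := fun q : α × α => f (q.1 + q.2) * g q.2)
        ((hf.comp measurable_add).mul (hg.comp measurable_snd))
    have hκb : ∀ u, |∫ y, f (u + y) * g y ∂ν| ≤ (C * B) * (ν Set.univ).toReal := fun u => by
      have := norm_integral_le_of_norm_le_const (μ := ν) (f := fun y => f (u + y) * g y)
        (C := C * B) (ae_of_all _ fun y => by
          rw [Real.norm_eq_abs, abs_mul]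
          exact mul_le_mul (hC _) (hgB _) (abs_nonneg _) hC0)
      rwa [Real.norm_eq_abs] at this
    rw [recE ν hg hgB (ψ := fun p : α × ℝ => f (w + p.1) * p.2)
      (by exact (hf.comp (measurable_const.add measurable_fst)).mul measurable_snd)
      (D := C) (fun p => by
        rw [abs_mul]
        exact le_trans (mul_le_mul (hC _) (habs1 p.2) (abs_nonneg _) hC0) (le_refl _)) (n + 1)]
    have hinner : ∀ p : α × ℝ, (∫ y, f (w + (p + (y, g y)).1) * (p + (y, g y)).2 ∂ν) =
        (∫ y, f ((w + p.1) + y) ∂ν) * p.2 + ∫ y, f ((w + p.1) + y) * g y ∂ν := by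
      intro p
      have h1 : ∀ y, f (w + (p + (y, g y)).1) * (p + (y, g y)).2
          = f ((w + p.1) + y) * p.2 + f ((w + p.1) + y) * g y := fun y => by
        have e1 : (p + (y, g y)).1 = p.1 + y := rfl
        have e2 : (p + (y, g y)).2 = p.2 + g y := rfl
        rw [e1, e2, ← add_assoc]
        ring
      simp_rw [h1]
      have hIa : Integrable (fun y => f ((w + p.1) + y) * p.2) ν :=
        (integrable_bdd (hf.comp (measurable_const.add measurable_id)).aestronglyMeasurable
          (C := C) (ae_of_all _ fun y => hC _)).mul_const _
      have hIb : Integrable (fun y => f ((w + p.1) + y) * g y) ν :=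
        integrable_bdd ((hf.comp (measurable_const.add measurable_id)).mul hg).aestronglyMeasurable
          (C := C * B) (ae_of_all _ fun y => by
            rw [abs_mul]; exact mul_le_mul (hC _) (hgB _) (abs_nonneg _) hC0)
      rw [integral_add hIa hIb, integral_mul_const]
    simp_rw [hinner]
    have hJ1 : Integrable (fun p : α × ℝ => (∫ y, f ((w + p.1) + y) ∂ν) * p.2)
        (convPow (gLift ν g) (n + 1)) := by
      refine integrable_adm ν hg hgB
        (by exact (hF1m.comp (measurable_const.add measurable_fst)).mul measurable_snd)
        (D := C * (ν Set.univ).toReal) (fun p => ?_) (n + 1)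
      rw [abs_mul]
      exact mul_le_mul (hF1b _) (habs1 p.2) (abs_nonneg _)
        (mul_nonneg hC0 ENNReal.toReal_nonneg)
    have hJ2 : Integrable (fun p : α × ℝ => ∫ y, f ((w + p.1) + y) * g y ∂ν)
        (convPow (gLift ν g) (n + 1)) := by
      refine integrable_adm ν hg hgB
        (by exact hκm.comp (measurable_const.add measurable_fst))
        (D := (C * B) * (ν Set.univ).toReal) (fun p => ?_) (n + 1)
      refine le_trans (hκb _) ?_
      have h0 : 0 ≤ (C * B) * (ν Set.univ).toReal :=
        mul_nonneg (mul_nonneg hC0 hB0) ENNReal.toReal_nonneg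
      nlinarith [sq_nonneg p.2]
    rw [integral_add hJ1 hJ2]
    have h41 := ih (fun u => ∫ y, f (u + y) ∂ν) (C * (ν Set.univ).toReal) hF1m hF1b w
    rw [h41]
    -- second piece
    have h51 := marg ν hg hgB (n + 1) (fun u => ∫ y, f ((w + u) + y) * g y ∂ν)
      ((C * B) * (ν Set.univ).toReal)
      (by exact hκm.comp (measurable_const.add measurable_id))
      (fun u => hκb (w + u))
    rw [h51]
    have hswap : ∫ z, ∫ y, f ((w + z) + y) * g y ∂ν ∂(convPow ν (n + 1)) =
        ∫ y, ∫ z, f ((w + z) + y) * g y ∂(convPow ν (n + 1)) ∂ν := by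
      refine integral_integral_swap (f := fun z y => f ((w + z) + y) * g y) ?_
      refine integrable_bdd ?_ (C := C * B) (ae_of_all _ fun q => ?_)
      · exact ((hf.comp (measurable_add.comp
          ((measurable_const.add measurable_fst).prodMk measurable_snd))).mul
          (hg.comp measurable_snd)).aestronglyMeasurable
      · show |f ((w + q.1) + q.2) * g q.2| ≤ C * B
        rw [abs_mul]
        exact mul_le_mul (hC _) (hgB _) (abs_nonneg _) hC0
    rw [hswap]
    have hmulout : ∀ y, ∫ z, f ((w + z) + y) * g y ∂(convPow ν (n + 1)) =
        g y * ∫ z, f ((w + y) + z) ∂(convPow ν (n + 1)) := fun y => by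
      rw [integral_mul_const, mul_comm]
      congr 1
      refine integral_congr_ae (ae_of_all _ fun z => ?_)
      exact congrArg f (by abel)
    simp_rw [hmulout]
    -- rewrite ih's inner integral: ∫ z, (∫ y', f (w+y+z+y') ∂ν) ∂convPow ν n = ∫ z, f (w+y+z) ∂convPow ν (n+1)
    have hconv : ∀ y, (∫ z, (∫ y', f ((w + y) + z + y') ∂ν) ∂(convPow ν n)) =
        ∫ z, f ((w + y) + z) ∂(convPow ν (n + 1)) := fun y => by
      rw [show convPow ν (n + 1) = (convPow ν n).conv ν from by rw [convPow],
        integral_conv (ψ := fun u => f ((w + y) + u))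
          (by exact hf.comp (measurable_const.add measurable_id))
          (ae_of_all _ fun u => hC _)]
      refine integral_congr_ae (ae_of_all _ fun z => ?_)
      refine integral_congr_ae (ae_of_all _ fun y' => ?_)
      exact congrArg f (by abel)
    simp_rw [hconv]
    push_cast
    ring

end Engine

section Series

lemma hasSum_of_succ {u : ℕ → ℝ} {S : ℝ} (h : HasSum (fun n => u (n + 1)) S) :
    HasSum u (u 0 + S) := by
  have hs : Summable u := (summable_nat_add_iff 1).mp h.summable
  have h2 := hs.hasSum
  rwa [Summable.tsum_eq_zero_add hs, h.tsum_eq] at h2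

lemma hasSum_succ_of {u : ℕ → ℝ} {S : ℝ} (h : HasSum u S) :
    HasSum (fun n => u (n + 1)) (S - u 0) := by
  have hs : Summable fun n => u (n + 1) := (summable_nat_add_iff 1).mpr h.summable
  have h2 := hs.hasSum
  have h3 := Summable.tsum_eq_zero_add h.summable
  rw [h.tsum_eq] at h3
  rwa [show (∑' n, u (n + 1)) = S - u 0 by linarith] at h2

lemma exp_hasSum (z : ℝ) : HasSum (fun n : ℕ => z ^ n / n.factorial) (Real.exp z) := by
  have h1 : ∑' n : ℕ, z ^ n / n.factorial = Real.exp z := by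
    rw [Real.exp_eq_exp_ℝ, NormedSpace.exp_eq_tsum_div]
  rw [← h1]
  exact (Real.summable_pow_div_factorial z).hasSum

end Series

section CP
variable {α : Type*} [MeasurableSpace α] [AddCommMonoid α] [MeasurableAdd₂ α]
variable (ν : Measure α) [IsFiniteMeasure ν] (t : ℝ)

lemma cp_sum_univ (ht : 0 ≤ t) :
    (Measure.sum fun n => ENNReal.ofReal (t ^ n / n.factorial) • convPow ν n) Set.univ =
      ENNReal.ofReal (Real.exp (t * (ν Set.univ).toReal)) := by
  rw [Measure.sum_apply _ MeasurableSet.univ]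
  have hν : ν Set.univ = ENNReal.ofReal ((ν Set.univ).toReal) :=
    (ENNReal.ofReal_toReal (measure_ne_top ν _)).symm
  have hterm : ∀ n : ℕ, (ENNReal.ofReal (t ^ n / n.factorial) • convPow ν n) Set.univ =
      ENNReal.ofReal ((t * (ν Set.univ).toReal) ^ n / n.factorial) := fun n => by
    rw [Measure.smul_apply, smul_eq_mul, convPow_univ,
      show (ν Set.univ) ^ n = ENNReal.ofReal (((ν Set.univ).toReal) ^ n) from by
        rw [ENNReal.ofReal_pow ENNReal.toReal_nonneg,
          ENNReal.ofReal_toReal (measure_ne_top ν _)],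
      ← ENNReal.ofReal_mul (by positivity)]
    congr 1
    rw [mul_pow]
    ring
  simp_rw [hterm]
  rw [← ENNReal.ofReal_tsum_of_nonneg (fun n => by positivity)
    (Real.summable_pow_div_factorial _), (exp_hasSum (t * (ν Set.univ).toReal)).tsum_eq]

lemma cp_isProb (ht : 0 ≤ t) : IsProbabilityMeasure (compoundPoisson ν t) := by
  constructor
  rw [compoundPoisson, Measure.smul_apply, cp_sum_univ ν t ht, smul_eq_mul,
    ← ENNReal.ofReal_mul (Real.exp_nonneg _), ← Real.exp_add,
    show -t * (ν Set.univ).toReal + t * (ν Set.univ).toReal = 0 by ring, Real.exp_zero,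
    ENNReal.ofReal_one]

lemma cp_expand (ht : 0 ≤ t) {φ : α → ℝ} (hφ : Measurable φ) {K : ℝ} (hK : ∀ z, |φ z| ≤ K) :
    HasSum (fun n => (Real.exp (-t * (ν Set.univ).toReal) * (t ^ n / n.factorial)) *
        ∫ z, φ z ∂(convPow ν n))
      (∫ z, φ z ∂(compoundPoisson ν t)) := by
  haveI : IsFiniteMeasure
      (Measure.sum fun n => ENNReal.ofReal (t ^ n / n.factorial) • convPow ν n) :=
    ⟨by rw [cp_sum_univ ν t ht]; exact ENNReal.ofReal_lt_top⟩
  have hint : Integrable φ (Measure.sum fun n => ENNReal.ofReal (t ^ n / n.factorial) • convPow ν n) :=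
    integrable_bdd hφ.aestronglyMeasurable (ae_of_all _ hK)
  have h1 := hasSum_integral_measure hint
  have h2 : ∀ n : ℕ, ∫ z, φ z ∂(ENNReal.ofReal (t ^ n / n.factorial) • convPow ν n) =
      (t ^ n / n.factorial) * ∫ z, φ z ∂(convPow ν n) := fun n => by
    rw [integral_smul_measure, ENNReal.toReal_ofReal (by positivity), smul_eq_mul]
  simp_rw [h2] at h1
  have h3 : ∫ z, φ z ∂(compoundPoisson ν t) = Real.exp (-t * (ν Set.univ).toReal) *
      ∫ z, φ z ∂(Measure.sum fun n => ENNReal.ofReal (t ^ n / n.factorial) • convPow ν n) := by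
    rw [compoundPoisson, integral_smul_measure, ENNReal.toReal_ofReal (Real.exp_nonneg _),
      smul_eq_mul]
  rw [h3]
  have h4 := h1.mul_left (Real.exp (-t * (ν Set.univ).toReal))
  have h5 : (fun n => (Real.exp (-t * (ν Set.univ).toReal) * (t ^ n / n.factorial)) *
      ∫ z, φ z ∂(convPow ν n)) = fun n => Real.exp (-t * (ν Set.univ).toReal) *
      ((t ^ n / n.factorial) * ∫ z, φ z ∂(convPow ν n)) := funext fun n => by ring
  rw [h5]
  exact h4

end CP

end PrelimAux

theorem cp_square_estimate
    {H : Type*} [NormedAddCommGroup H] [InnerProductSpace ℝ H] [CompleteSpace H]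
    [SecondCountableTopology H] [MeasurableSpace H] [BorelSpace H]
    (ν : Measure H) [IsFiniteMeasure ν] (hν0 : ν {0} = 0)
    (t : ℝ) (ht : 0 < t)
    (f : H → ℝ) (hf : Measurable f) (hfb : ∃ C, ∀ x, |f x| ≤ C)
    (x : H) :
    ∫⁻ y, ENNReal.ofReal ((cpSemigroup ν t f (x + y) - cpSemigroup ν t f x) ^ 2) ∂ν ≤
      ENNReal.ofReal ((1 / t) * cpSemigroup ν t (fun z => f z ^ 2) x) := by
  classical
  obtain ⟨C0, hC0⟩ := hfb
  set C : ℝ := max C0 0 with hCdef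
  have hC : ∀ z, |f z| ≤ C := fun z => (hC0 z).trans (le_max_left _ _)
  have hCnn : 0 ≤ C := le_max_right _ _
  haveI hprob : IsProbabilityMeasure (compoundPoisson ν t) := cp_isProb ν t ht.le
  set lam : ℝ := (ν Set.univ).toReal with hlamdef
  have hlamnn : 0 ≤ lam := by rw [hlamdef]; exact ENNReal.toReal_nonneg
  set Pf : H → ℝ := cpSemigroup ν t f with hPfdef
  have hPfi : ∀ w, Pf w = ∫ z, f (w + z) ∂(compoundPoisson ν t) := fun w => rfl
  have hPfm : Measurable Pf := by
    have h : Measurable fun w : H => ∫ z, f (w + z) ∂(compoundPoisson ν t) :=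
      meas_param _ (F := fun q : H × H => f (q.1 + q.2)) (hf.comp measurable_add)
    exact h
  have hPfb : ∀ w, |Pf w| ≤ C := fun w => by
    rw [hPfi]
    have h := norm_integral_le_of_norm_le_const (μ := compoundPoisson ν t)
      (f := fun z => f (w + z)) (C := C)
      (ae_of_all _ fun z => by rw [Real.norm_eq_abs]; exact hC _)
    rwa [probReal_univ, mul_one, Real.norm_eq_abs] at h
  set g : H → ℝ := fun y => Pf (x + y) - Pf x with hgdef
  have hgy : ∀ y, g y = Pf (x + y) - Pf x := fun _ => rfl
  have hg : Measurable g := (hPfm.comp (measurable_const.add measurable_id)).sub measurable_const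
  have hgB : ∀ y, |g y| ≤ 2 * C := fun y => by
    rw [hgy, sub_eq_add_neg]
    refine (abs_add_le _ _).trans ?_
    rw [abs_neg]
    linarith [hPfb (x + y), hPfb x]
  have hB2nn : (0 : ℝ) ≤ 2 * C := by positivity
  -- the coefficient sequence
  set c : ℕ → ℝ := fun n => Real.exp (-t * lam) * (t ^ n / n.factorial) with hcdef
  have hcn : ∀ n, 0 ≤ c n := fun n => by
    rw [hcdef]
    exact mul_nonneg (Real.exp_nonneg _)
      (div_nonneg (pow_nonneg ht.le n) (Nat.cast_nonneg _))
  have hc_succ : ∀ n : ℕ, c (n + 1) * ((n : ℝ) + 1) = t * c n := fun n => by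
    rw [hcdef]
    have h1 : ((n.factorial : ℝ)) ≠ 0 := Nat.cast_ne_zero.mpr n.factorial_ne_zero
    have h2 : ((n : ℝ) + 1) ≠ 0 := by positivity
    simp only [Nat.factorial_succ]
    push_cast
    field_simp
    ring
  have hvsum : HasSum (fun n => c n * lam ^ n) 1 := by
    have h1 := (exp_hasSum (t * lam)).mul_left (Real.exp (-t * lam))
    have h2 : (fun n => c n * lam ^ n) =
        fun n : ℕ => Real.exp (-t * lam) * ((t * lam) ^ n / n.factorial) := funext fun n => by
      rw [hcdef, mul_pow]; ring
    have h3 : Real.exp (-t * lam) * Real.exp (t * lam) = 1 := by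
      rw [← Real.exp_add, show -t * lam + t * lam = 0 by ring, Real.exp_zero]
    rw [h2, ← h3]
    exact h1
  -- key scalar quantities
  set A : ℝ := ∫ y, g y ∂ν with hAdef
  set G : ℝ := ∫ y, g y ^ 2 ∂ν with hGdef
  set W : ℝ := ∫ y, g y * Pf (x + y) ∂ν with hWdef
  set Q : ℝ := cpSemigroup ν t (fun z => f z ^ 2) x with hQdef
  have hgInt : Integrable g ν := integrable_bdd hg.aestronglyMeasurable (ae_of_all _ hgB)
  have hg2Int : Integrable (fun y => g y ^ 2) ν := by
    refine integrable_bdd (hg.pow_const 2).aestronglyMeasurable (C := (2 * C) ^ 2)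
      (ae_of_all _ fun y => ?_)
    rw [abs_of_nonneg (sq_nonneg _), ← sq_abs]
    exact pow_le_pow_left₀ (abs_nonneg _) (hgB y) 2
  have hPfxa : Measurable fun y : H => Pf (x + y) := hPfm.comp (measurable_const.add measurable_id)
  have hgPfInt : Integrable (fun y => g y * Pf (x + y)) ν := by
    refine integrable_bdd (hg.mul hPfxa).aestronglyMeasurable (C := 2 * C * C)
      (ae_of_all _ fun y => ?_)
    rw [abs_mul]
    exact mul_le_mul (hgB y) (hPfb _) (abs_nonneg _) hB2nn
  have hGW : G = W - A * Pf x := by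
    rw [hGdef, hWdef, hAdef]
    have h1 : ∀ y : H, g y ^ 2 = g y * Pf (x + y) - g y * Pf x := fun y => by rw [hgy]; ring
    rw [integral_congr_ae (ae_of_all _ h1),
      integral_sub hgPfInt (hgInt.mul_const _), integral_mul_const]
  -- the a_n functions
  have ham : ∀ n : ℕ, Measurable fun y : H => ∫ z, f (x + y + z) ∂(convPow ν n) := fun n =>
    meas_param _ (F := fun q : H × H => f (x + q.1 + q.2))
      (hf.comp ((measurable_const.add measurable_fst).add measurable_snd))
  have hab : ∀ (n : ℕ) (y : H), |∫ z, f (x + y + z) ∂(convPow ν n)| ≤ C * lam ^ n := fun n y => by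
    have h := norm_integral_le_of_norm_le_const (μ := convPow ν n)
      (f := fun z => f (x + y + z)) (C := C)
      (ae_of_all _ fun z => by rw [Real.norm_eq_abs]; exact hC _)
    rwa [Real.norm_eq_abs, measureReal_def, convPow_univ, ENNReal.toReal_pow, ← hlamdef] at h
  have hPfy : ∀ y : H, HasSum (fun n => c n * ∫ z, f (x + y + z) ∂(convPow ν n)) (Pf (x + y)) :=
    fun y => cp_expand ν t ht.le (φ := fun z => f (x + y + z))
      (hf.comp (measurable_const.add measurable_id)) (K := C) (fun z => hC _)
  have Sq : HasSum (fun n => c n * ∫ z, f (x + z) ^ 2 ∂(convPow ν n)) Q :=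
    cp_expand ν t ht.le (φ := fun z => f (x + z) ^ 2)
      ((hf.comp (measurable_const.add measurable_id)).pow_const 2) (K := C ^ 2)
      (fun z => by
        show |f (x + z) ^ 2| ≤ C ^ 2
        rw [abs_of_nonneg (sq_nonneg _), ← sq_abs (f (x + z))]
        exact pow_le_pow_left₀ (abs_nonneg _) (hC _) 2)
  have Sε : HasSum (fun n => c n * ∫ z, f (x + z) ∂(convPow ν n)) (Pf x) :=
    cp_expand ν t ht.le (φ := fun z => f (x + z))
      (hf.comp (measurable_const.add measurable_id)) (K := C) (fun z => hC _)
  -- the Mecke series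
  have hddb : ∀ n : ℕ, |∫ y, g y * (∫ z, f (x + y + z) ∂(convPow ν n)) ∂ν| ≤
      2 * C * (C * lam ^ n) * lam := fun n => by
    have h := norm_integral_le_of_norm_le_const (μ := ν)
      (f := fun y => g y * (∫ z, f (x + y + z) ∂(convPow ν n))) (C := 2 * C * (C * lam ^ n))
      (ae_of_all _ fun y => by
        rw [Real.norm_eq_abs, abs_mul]
        exact mul_le_mul (hgB y) (hab n y) (abs_nonneg _) hB2nn)
    rwa [Real.norm_eq_abs, measureReal_def, ← hlamdef] at h
  have hSWsummable : Summable
      (fun n => c n * ∫ y, g y * (∫ z, f (x + y + z) ∂(convPow ν n)) ∂ν) := by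
    refine Summable.of_abs (Summable.of_nonneg_of_le (fun n => abs_nonneg _) (fun n => ?_)
      (hvsum.summable.mul_left (2 * C * C * lam)))
    rw [abs_mul, abs_of_nonneg (hcn n)]
    calc c n * |∫ y, g y * (∫ z, f (x + y + z) ∂(convPow ν n)) ∂ν|
        ≤ c n * (2 * C * (C * lam ^ n) * lam) := mul_le_mul_of_nonneg_left (hddb n) (hcn n)
      _ = 2 * C * C * lam * (c n * lam ^ n) := by ring
  have hW2 : W = ∑' n, c n * ∫ y, g y * (∫ z, f (x + y + z) ∂(convPow ν n)) ∂ν := by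
    rw [hWdef]
    have h1 : ∀ y : H, g y * Pf (x + y) =
        ∑' n, g y * (c n * ∫ z, f (x + y + z) ∂(convPow ν n)) := fun y => by
      rw [tsum_mul_left, (hPfy y).tsum_eq]
    rw [integral_congr_ae (ae_of_all _ h1)]
    rw [integral_tsum
      (f := fun n (y : H) => g y * (c n * ∫ z, f (x + y + z) ∂(convPow ν n)))
      (fun n => (hg.mul ((ham n).const_mul (c n))).aestronglyMeasurable) ?_]
    · congr 1
      funext n
      rw [show (fun y => g y * (c n * ∫ z, f (x + y + z) ∂(convPow ν n))) =
          fun y => c n * (g y * ∫ z, f (x + y + z) ∂(convPow ν n)) from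
        funext fun y => by ring, integral_const_mul]
    · -- the lintegral bound
      have hpt : ∀ (n : ℕ) (y : H),
          (‖g y * (c n * ∫ z, f (x + y + z) ∂(convPow ν n))‖₊ : ℝ≥0∞) ≤
            ENNReal.ofReal (2 * C * (c n * (C * lam ^ n))) := fun n y => by
        rw [← enorm_eq_nnnorm, ← ofReal_norm]
        refine ENNReal.ofReal_le_ofReal ?_
        rw [Real.norm_eq_abs, abs_mul, abs_mul, abs_of_nonneg (hcn n)]
        exact mul_le_mul (hgB y) (mul_le_mul_of_nonneg_left (hab n y) (hcn n))
          (mul_nonneg (hcn n) (abs_nonneg _)) hB2nn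
      have hb1 : ∀ n : ℕ, ∫⁻ y, ‖g y * (c n * ∫ z, f (x + y + z) ∂(convPow ν n))‖₊ ∂ν ≤
          ENNReal.ofReal (2 * C * (c n * (C * lam ^ n)) * lam) := fun n => by
        calc ∫⁻ y, ‖g y * (c n * ∫ z, f (x + y + z) ∂(convPow ν n))‖₊ ∂ν
            ≤ ∫⁻ _, ENNReal.ofReal (2 * C * (c n * (C * lam ^ n))) ∂ν :=
              lintegral_mono (hpt n)
          _ = ENNReal.ofReal (2 * C * (c n * (C * lam ^ n))) * ν Set.univ := lintegral_const _
          _ = ENNReal.ofReal (2 * C * (c n * (C * lam ^ n)) * lam) := by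
              rw [show ν Set.univ = ENNReal.ofReal lam from by
                  rw [hlamdef, ENNReal.ofReal_toReal (measure_ne_top ν _)],
                ← ENNReal.ofReal_mul (by positivity)]
      have hsum2 : Summable (fun n => 2 * C * (c n * (C * lam ^ n)) * lam) := by
        have h5 : (fun n => 2 * C * (c n * (C * lam ^ n)) * lam) =
            fun n => 2 * C * C * lam * (c n * lam ^ n) := funext fun n => by ring
        rw [h5]
        exact hvsum.summable.mul_left _
      refine ne_of_lt (lt_of_le_of_lt (ENNReal.tsum_le_tsum hb1) ?_)
      rw [← ENNReal.ofReal_tsum_of_nonneg (fun n => by positivity) hsum2]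
      exact ENNReal.ofReal_lt_top
  have SW : HasSum (fun n => c n * ∫ y, g y * (∫ z, f (x + y + z) ∂(convPow ν n)) ∂ν) W := by
    have h := hSWsummable.hasSum
    rwa [← hW2] at h
  -- engine moment series
  have SZ : HasSum (fun n => c n * ∫ p, p.2 ∂(convPow (gLift ν g) n)) (t * A) := by
    have h1 : HasSum (fun n => c (n + 1) * ∫ p, p.2 ∂(convPow (gLift ν g) (n + 1)))
        (t * A * 1) := by
      have h2 := hvsum.mul_left (t * A)
      have h3 : (fun n => c (n + 1) * ∫ p, p.2 ∂(convPow (gLift ν g) (n + 1))) =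
          fun n => t * A * (c n * lam ^ n) := funext fun n => by
        rw [momZ ν hg hgB n, ← hAdef, ← hlamdef]
        linear_combination (A * lam ^ n) * hc_succ n
      rw [h3]
      exact h2
    have h4 := hasSum_of_succ
      (u := fun n => c n * ∫ p, p.2 ∂(convPow (gLift ν g) n)) h1
    simp only [momZ0, mul_zero, zero_add, mul_one] at h4
    exact h4
  have SB : HasSum (fun n => c n * ∫ p, p.2 ^ 2 ∂(convPow (gLift ν g) n))
      (t * G + t ^ 2 * A ^ 2) := by
    have hc2 : ∀ n : ℕ, c (n + 2) * (((n : ℝ) + 2) * ((n : ℝ) + 1)) = t ^ 2 * c n := fun n => by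
      have h1 := hc_succ (n + 1)
      have h2 := hc_succ n
      push_cast at h1
      linear_combination ((n : ℝ) + 1) * h1 + t * h2
    have hw1 : HasSum (fun n => c (n + 2) * ∫ p, p.2 ^ 2 ∂(convPow (gLift ν g) (n + 2)))
        (t * G * (1 - c 0 * lam ^ 0) + t ^ 2 * A ^ 2 * 1) := by
      have ha := (hasSum_succ_of hvsum).mul_left (t * G)
      have hb := hvsum.mul_left (t ^ 2 * A ^ 2)
      have h3 : (fun n => c (n + 2) * ∫ p, p.2 ^ 2 ∂(convPow (gLift ν g) (n + 2))) =
          fun n => t * G * (c (n + 1) * lam ^ (n + 1)) + t ^ 2 * A ^ 2 * (c n * lam ^ n) :=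
        funext fun n => by
          rw [momB ν hg hgB n, ← hGdef, ← hAdef, ← hlamdef]
          have h1 := hc_succ (n + 1)
          push_cast at h1
          linear_combination (G * lam ^ (n + 1)) * h1 + (A ^ 2 * lam ^ n) * hc2 n
      rw [h3]
      exact ha.add hb
    have hw0 := hasSum_of_succ
      (u := fun n => c (n + 1) * ∫ p, p.2 ^ 2 ∂(convPow (gLift ν g) (n + 1))) hw1
    have hS := hasSum_of_succ
      (u := fun n => c n * ∫ p, p.2 ^ 2 ∂(convPow (gLift ν g) n)) hw0
    simp only [momB0, momB1 ν hg hgB, mul_zero, zero_add] at hS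
    have hc1 : c 1 = Real.exp (-t * lam) * t := by rw [hcdef]; norm_num
    have hc0 : c 0 = Real.exp (-t * lam) := by rw [hcdef]; norm_num
    have hval : c 1 * (∫ y, g y ^ 2 ∂ν) + (t * G * (1 - c 0 * lam ^ 0) + t ^ 2 * A ^ 2 * 1) =
        t * G + t ^ 2 * A ^ 2 := by
      rw [hc1, hc0, ← hGdef, pow_zero]
      ring
    rwa [hval] at hS
  -- the delta series
  have hδ0 : ∫ p, f (x + p.1) * p.2 ∂(convPow (gLift ν g) 0) = 0 := by
    rw [convPow, integral_dirac' _ _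
      (by exact ((hf.comp (measurable_const.add measurable_fst)).mul measurable_snd).stronglyMeasurable)]
    show f (x + (0 : H × ℝ).1) * (0 : H × ℝ).2 = 0
    simp
  have Sδ : HasSum (fun n => c n * ∫ p, f (x + p.1) * p.2 ∂(convPow (gLift ν g) n)) (t * W) := by
    have h1 : HasSum (fun n => c (n + 1) * ∫ p, f (x + p.1) * p.2 ∂(convPow (gLift ν g) (n + 1)))
        (t * W) := by
      have h2 := SW.mul_left t
      have h3 : (fun n => c (n + 1) * ∫ p, f (x + p.1) * p.2 ∂(convPow (gLift ν g) (n + 1))) =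
          fun n => t * (c n * ∫ y, g y * (∫ z, f (x + y + z) ∂(convPow ν n)) ∂ν) :=
        funext fun n => by
          rw [delta ν hg hgB n f C hf hC x]
          linear_combination (∫ y, g y * (∫ z, f (x + y + z) ∂(convPow ν n)) ∂ν) * hc_succ n
      rw [h3]
      exact h2
    have h4 := hasSum_of_succ
      (u := fun n => c n * ∫ p, f (x + p.1) * p.2 ∂(convPow (gLift ν g) n)) h1
    simp only [hδ0, mul_zero, zero_add] at h4
    exact h4
  -- the V expansion
  set K : ℝ := t * A with hKdef
  have habs1 : ∀ m : ℝ, |m| ≤ 1 + m ^ 2 := fun m => by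
    nlinarith [sq_nonneg (|m| - 1), sq_abs m]
  have hVexp : ∀ n : ℕ, ∫ p, (f (x + p.1) - p.2 + K) ^ 2 ∂(convPow (gLift ν g) n) =
      (∫ z, f (x + z) ^ 2 ∂(convPow ν n)) + (∫ p, p.2 ^ 2 ∂(convPow (gLift ν g) n)) +
        K ^ 2 * lam ^ n - 2 * (∫ p, f (x + p.1) * p.2 ∂(convPow (gLift ν g) n)) +
        2 * K * (∫ z, f (x + z) ∂(convPow ν n)) -
        2 * K * (∫ p, p.2 ∂(convPow (gLift ν g) n)) := by
    intro n
    have hmF : Measurable fun p : H × ℝ => f (x + p.1) :=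
      hf.comp (measurable_const.add measurable_fst)
    have hI1 : Integrable (fun p : H × ℝ => f (x + p.1) ^ 2) (convPow (gLift ν g) n) := by
      refine integrable_adm ν hg hgB (by exact hmF.pow_const 2) (D := C ^ 2) (fun p => ?_) n
      rw [abs_of_nonneg (sq_nonneg _), ← sq_abs]
      nlinarith [pow_le_pow_left₀ (abs_nonneg (f (x + p.1))) (hC (x + p.1)) 2,
        sq_nonneg p.2, sq_nonneg C]
    have hI2 : Integrable (fun p : H × ℝ => p.2 ^ 2) (convPow (gLift ν g) n) :=
      integrable_adm ν hg hgB (by exact measurable_snd.pow_const 2) hsq_adm n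
    have hI4 : Integrable (fun p : H × ℝ => 2 * (f (x + p.1) * p.2)) (convPow (gLift ν g) n) := by
      refine Integrable.const_mul ?_ 2
      refine integrable_adm ν hg hgB (by exact hmF.mul measurable_snd) (D := C) (fun p => ?_) n
      rw [abs_mul]
      exact mul_le_mul (hC _) (habs1 p.2) (abs_nonneg _) hCnn
    have hI5 : Integrable (fun p : H × ℝ => 2 * K * f (x + p.1)) (convPow (gLift ν g) n) := by
      refine Integrable.const_mul ?_ _
      exact integrable_adm ν hg hgB (by exact hmF) (D := C)
        (fun p => le_trans (hC _) (by nlinarith [sq_nonneg p.2])) n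
    have hI6 : Integrable (fun p : H × ℝ => 2 * K * p.2) (convPow (gLift ν g) n) :=
      (integrable_adm ν hg hgB (by exact measurable_snd) habs_adm n).const_mul _
    have he : (fun p : H × ℝ => (f (x + p.1) - p.2 + K) ^ 2) =
        fun p => (f (x + p.1) ^ 2 + p.2 ^ 2 + K ^ 2) - 2 * (f (x + p.1) * p.2) +
          2 * K * f (x + p.1) - 2 * K * p.2 := funext fun p => by ring
    rw [he]
    have hIa : Integrable (fun p : H × ℝ => f (x + p.1) ^ 2 + p.2 ^ 2 + K ^ 2)
        (convPow (gLift ν g) n) := (hI1.add hI2).add (integrable_const _)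
    have hIb : Integrable (fun p : H × ℝ =>
        (f (x + p.1) ^ 2 + p.2 ^ 2 + K ^ 2) - 2 * (f (x + p.1) * p.2))
        (convPow (gLift ν g) n) := hIa.sub hI4
    have hIc : Integrable (fun p : H × ℝ =>
        ((f (x + p.1) ^ 2 + p.2 ^ 2 + K ^ 2) - 2 * (f (x + p.1) * p.2)) + 2 * K * f (x + p.1))
        (convPow (gLift ν g) n) := hIb.add hI5
    have hI12 : Integrable (fun p : H × ℝ => f (x + p.1) ^ 2 + p.2 ^ 2)
        (convPow (gLift ν g) n) := hI1.add hI2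
    rw [integral_sub hIc hI6, integral_add hIb hI5, integral_sub hIa hI4,
      integral_add hI12 (integrable_const _), integral_add hI1 hI2]
    have hmarg2 : ∫ p, f (x + p.1) ^ 2 ∂(convPow (gLift ν g) n) =
        ∫ z, f (x + z) ^ 2 ∂(convPow ν n) :=
      marg ν hg hgB n (fun z => f (x + z) ^ 2) (C ^ 2)
        (by exact (hf.comp (measurable_const.add measurable_id)).pow_const 2)
        (fun z => by
          show |f (x + z) ^ 2| ≤ C ^ 2
          rw [abs_of_nonneg (sq_nonneg _), ← sq_abs (f (x + z))]
          exact pow_le_pow_left₀ (abs_nonneg _) (hC _) 2)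
    have hmarg1 : ∫ p, f (x + p.1) ∂(convPow (gLift ν g) n) =
        ∫ z, f (x + z) ∂(convPow ν n) :=
      marg ν hg hgB n (fun z => f (x + z)) C
        (by exact hf.comp (measurable_const.add measurable_id)) (fun z => hC _)
    rw [hmarg2, integral_const, smul_eq_mul, measureReal_def, convPow_gLift_mass ν hg, ← hlamdef,
      integral_const_mul, integral_const_mul, hmarg1, integral_const_mul]
    ring
  -- assemble
  have SV : HasSum (fun n => c n * ∫ p, (f (x + p.1) - p.2 + K) ^ 2 ∂(convPow (gLift ν g) n))
      (Q - t * G) := by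
    have h := ((((Sq.add SB).add (hvsum.mul_left (K ^ 2))).sub (Sδ.mul_left 2)).add
      (Sε.mul_left (2 * K))).sub (SZ.mul_left (2 * K))
    have h2 : (fun n => c n * ∫ p, (f (x + p.1) - p.2 + K) ^ 2 ∂(convPow (gLift ν g) n)) =
        fun n => ((((c n * ∫ z, f (x + z) ^ 2 ∂(convPow ν n) +
          c n * ∫ p, p.2 ^ 2 ∂(convPow (gLift ν g) n)) +
          K ^ 2 * (c n * lam ^ n)) -
          2 * (c n * ∫ p, f (x + p.1) * p.2 ∂(convPow (gLift ν g) n))) +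
          2 * K * (c n * ∫ z, f (x + z) ∂(convPow ν n))) -
          2 * K * (c n * ∫ p, p.2 ∂(convPow (gLift ν g) n)) := funext fun n => by
      rw [hVexp n]; ring
    have h3 : Q - t * G = ((((Q + (t * G + t ^ 2 * A ^ 2)) + K ^ 2 * 1) - 2 * (t * W)) +
        2 * K * Pf x) - 2 * K * (t * A) := by
      rw [hKdef, hGW]
      ring
    rw [h2, h3]
    exact h
  have hQtG : 0 ≤ Q - t * G := by
    rw [← SV.tsum_eq]
    exact tsum_nonneg fun n => mul_nonneg (hcn n) (integral_nonneg fun p => sq_nonneg _)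
  have hGQ : G ≤ 1 / t * Q := by
    rw [one_div, inv_mul_eq_div, le_div_iff₀ ht]
    linarith
  have hL : ∫⁻ y, ENNReal.ofReal ((Pf (x + y) - Pf x) ^ 2) ∂ν = ENNReal.ofReal G := by
    rw [hGdef, ← MeasureTheory.ofReal_integral_eq_lintegral_ofReal hg2Int
      (ae_of_all _ fun y => sq_nonneg _)]
  rw [hL]
  exact ENNReal.ofReal_le_ofReal hGQ
end

section
/- Let Ω ⊆ ℝ^d be open and let f : Ω → ℝ be bounded and Lebesgue measurable, satisfying the logarithmic Campanato condition with constants C > 0 and α > 1, i.e. ∫_{B_r(x)} |f(y) − f̄_{x,r}|² dy ≤ C r^d / |log₂ r|^{2α} for every x ∈ Ω and every 0 < r < 1/2 with B_r(x) ⊆ Ω, where f̄_{x,r} := (1/|B_r(x)|) ∫_{B_r(x)} f(y) dy. Then there is a constant C' > 0 depending only on C and d such that for every x ∈ Ω and all radii 0 < r₂ < r₁ < min(dist(x, ∂Ω), 1/2), |f̄_{x,r₁} − f̄_{x,r₂}| ≤ C' (1 + (r₁/r₂)^{d/2}) / |log₂ r₁|^α. -/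
open MeasureTheory

noncomputable def ballAvg {d : ℕ} (f : EuclideanSpace ℝ (Fin d) → ℝ)
    (x : EuclideanSpace ℝ (Fin d)) (r : ℝ) : ℝ :=
  (volume (Metric.ball x r)).toReal⁻¹ * ∫ y in Metric.ball x r, f y

private lemma aux_mul_le (a b : ℝ) (ha : 0 ≤ a) (hb : 0 ≤ b) : a * b ≤ (a + 1) * (1 + b) := by
  nlinarith

set_option maxHeartbeats 1000000 in
theorem campanato_average_two_radii
    (d : ℕ) (C α : ℝ) (hC : 0 < C) (hα : 1 < α) :
    ∃ C' > (0 : ℝ),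
      ∀ (Ω : Set (EuclideanSpace ℝ (Fin d))), IsOpen Ω →
      ∀ (f : EuclideanSpace ℝ (Fin d) → ℝ), Measurable f →
        (∃ B, ∀ x ∈ Ω, |f x| ≤ B) →
        (∀ x ∈ Ω, ∀ r : ℝ, 0 < r → r < 1 / 2 → Metric.ball x r ⊆ Ω →
          ∫ y in Metric.ball x r, (f y - ballAvg f x r) ^ 2 ≤
            C * r ^ d / |Real.logb 2 r| ^ (2 * α)) →
        ∀ x ∈ Ω, ∀ r₁ r₂ : ℝ, 0 < r₂ → r₂ < r₁ →
          r₁ < min (Metric.infDist x (frontier Ω)) (1 / 2) →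
          |ballAvg f x r₁ - ballAvg f x r₂| ≤
            C' * (1 + (r₁ / r₂) ^ ((d : ℝ) / 2)) / |Real.logb 2 r₁| ^ α := by
  classical
  set ωd : ℝ := (volume (Metric.ball (0 : EuclideanSpace ℝ (Fin d)) 1)).toReal with hωd_def
  have hωd : 0 < ωd :=
    ENNReal.toReal_pos (Metric.measure_ball_pos _ _ one_pos).ne' measure_ball_lt_top.ne
  refine ⟨Real.sqrt (C / ωd) + 1, by positivity, ?_⟩
  intro Ω hΩ f hf hBdd hCam x hx r₁ r₂ hr₂ hr₁₂ hr₁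
  obtain ⟨B, hB⟩ := hBdd
  have hr₁pos : 0 < r₁ := hr₂.trans hr₁₂
  have hr₁half : r₁ < 1 / 2 := lt_of_lt_of_le hr₁ (min_le_right _ _)
  -- Ω is not the whole space
  have hΩne : Ω ≠ Set.univ := by
    intro h
    rw [h, frontier_univ, Metric.infDist_empty] at hr₁
    have := lt_of_lt_of_le hr₁ (min_le_left _ _)
    linarith
  -- dimension is positive
  have hd : 0 < d := by
    rcases Nat.eq_zero_or_pos d with h0 | h; swap
    · exact h
    subst h0
    have hsub : Subsingleton (EuclideanSpace ℝ (Fin 0)) :=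
      ⟨fun a b => by ext i; exact i.elim0⟩
    exact absurd (Set.eq_univ_of_forall fun y => (hsub.elim y x) ▸ hx) hΩne
  have hne : Nonempty (Fin d) := Fin.pos_iff_nonempty.mp hd
  have hnt : Nontrivial (EuclideanSpace ℝ (Fin d)) := by infer_instance
  -- the ball of radius r₁ is contained in Ω
  have hsub : Metric.ball x r₁ ⊆ Ω := by
    obtain ⟨y, hyf, hyd⟩ := exists_mem_frontier_infDist_compl_eq_dist hx hΩne
    have h1 : r₁ ≤ Metric.infDist x Ωᶜ := le_of_lt <| by
      rw [hyd]
      calc r₁ < Metric.infDist x (frontier Ω) := lt_of_lt_of_le hr₁ (min_le_left _ _)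
        _ ≤ dist x y := Metric.infDist_le_dist_of_mem hyf
    exact (Metric.ball_subset_ball h1).trans Metric.ball_infDist_compl_subset
  have hsub₂ : Metric.ball x r₂ ⊆ Metric.ball x r₁ := Metric.ball_subset_ball hr₁₂.le
  -- volume formulas
  have hvol : ∀ r : ℝ, 0 < r → (volume (Metric.ball x r)).toReal = r ^ d * ωd := by
    intro r hr
    rw [Measure.addHaar_ball (μ := (volume : Measure (EuclideanSpace ℝ (Fin d)))) x hr.le,
      ENNReal.toReal_mul, ENNReal.toReal_ofReal (by positivity), finrank_euclideanSpace_fin]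
  set v₂ : ℝ := (volume (Metric.ball x r₂)).toReal with hv₂_def
  have hv₂pos : 0 < v₂ :=
    ENNReal.toReal_pos (Metric.measure_ball_pos _ _ hr₂).ne' measure_ball_lt_top.ne
  set A₁ : ℝ := ballAvg f x r₁ with hA₁_def
  set g : EuclideanSpace ℝ (Fin d) → ℝ := fun y => f y - A₁ with hg_def
  set L : ℝ := |Real.logb 2 r₁| with hL_def
  have hL : 0 < L :=
    abs_pos.mpr (Real.logb_neg (by norm_num) hr₁pos (by linarith)).ne
  -- integrability
  haveI hfin : IsFiniteMeasure (volume.restrict (Metric.ball x r₂)) :=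
    ⟨by rw [Measure.restrict_apply_univ]; exact measure_ball_lt_top⟩
  have hgmeas : Measurable g := hf.sub measurable_const
  have hgbd : ∀ᵐ y ∂(volume.restrict (Metric.ball x r₂)), ‖g y‖ ≤ B + |A₁| := by
    refine (ae_restrict_iff' measurableSet_ball).mpr (ae_of_all _ fun y hy => ?_)
    have : |f y| ≤ B := hB y (hsub (hsub₂ hy))
    calc ‖g y‖ = |f y - A₁| := rfl
      _ ≤ |f y| + |A₁| := abs_sub _ _
      _ ≤ B + |A₁| := by linarith
  have hgL2 : MemLp g (ENNReal.ofReal 2) (volume.restrict (Metric.ball x r₂)) :=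
    MemLp.of_bound hgmeas.aestronglyMeasurable _ hgbd
  have h1L2 : MemLp (fun _ => (1 : ℝ)) (ENNReal.ofReal 2)
      (volume.restrict (Metric.ball x r₂)) := memLp_const 1
  -- Cauchy–Schwarz
  have hCS := integral_mul_norm_le_Lp_mul_Lq (Real.HolderConjugate.two_two) hgL2 h1L2
  -- rewrite the Cauchy–Schwarz inequality in convenient form
  set S : ℝ := ∫ y in Metric.ball x r₂, (g y) ^ 2 with hS_def
  have hSnn : 0 ≤ S :=
    setIntegral_nonneg measurableSet_ball fun y _ => sq_nonneg _
  have h2 : (∫ y in Metric.ball x r₂, ‖g y‖ ^ (2 : ℝ)) = S := by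
    refine setIntegral_congr_fun measurableSet_ball fun y _ => ?_
    rw [Real.rpow_two, Real.norm_eq_abs, sq_abs]
  have h3 : (∫ _y in Metric.ball x r₂, ‖(1 : ℝ)‖ ^ (2 : ℝ)) = v₂ := by
    simp [Real.one_rpow, hv₂_def, Measure.real]
  have hI : |∫ y in Metric.ball x r₂, g y| ≤ Real.sqrt S * Real.sqrt v₂ := by
    calc |∫ y in Metric.ball x r₂, g y| ≤ ∫ y in Metric.ball x r₂, ‖g y‖ :=
          norm_integral_le_integral_norm g
      _ = ∫ y in Metric.ball x r₂, ‖g y‖ * ‖(1 : ℝ)‖ := by simp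
      _ ≤ (∫ y in Metric.ball x r₂, ‖g y‖ ^ (2:ℝ)) ^ ((1:ℝ)/2) *
            (∫ _y in Metric.ball x r₂, ‖(1:ℝ)‖ ^ (2:ℝ)) ^ ((1:ℝ)/2) := by
          simpa using hCS
      _ = Real.sqrt S * Real.sqrt v₂ := by
          rw [h2, h3, Real.sqrt_eq_rpow, Real.sqrt_eq_rpow]
  -- monotonicity of the integral of g² in the domain
  have hint₁ : IntegrableOn (fun y => (g y) ^ 2) (Metric.ball x r₁) volume := by
    refine Measure.integrableOn_of_bounded (M := (B + |A₁|) ^ 2) measure_ball_lt_top.ne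
      ((hgmeas.pow_const 2).aestronglyMeasurable) ?_
    refine (ae_restrict_iff' measurableSet_ball).mpr (ae_of_all _ fun y hy => ?_)
    have h4 : |f y| ≤ B := hB y (hsub hy)
    have h5 : |g y| ≤ B + |A₁| := by
      calc |g y| = |f y - A₁| := rfl
        _ ≤ |f y| + |A₁| := abs_sub _ _
        _ ≤ B + |A₁| := by linarith
    have h6 : (0:ℝ) ≤ B + |A₁| := le_trans (abs_nonneg _) h5
    calc ‖(g y) ^ 2‖ = |g y| ^ 2 := by rw [Real.norm_eq_abs, abs_pow]
      _ ≤ (B + |A₁|) ^ 2 := by nlinarith [abs_nonneg (g y)]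
  have hmono : S ≤ ∫ y in Metric.ball x r₁, (g y) ^ 2 :=
    setIntegral_mono_set hint₁ (ae_of_all _ fun y => sq_nonneg _)
      (HasSubset.Subset.eventuallyLE hsub₂)
  have hCam' : (∫ y in Metric.ball x r₁, (g y) ^ 2) ≤ C * r₁ ^ d / L ^ (2 * α) :=
    hCam x hx r₁ hr₁pos hr₁half hsub
  have hSle : S ≤ C * r₁ ^ d / L ^ (2 * α) := hmono.trans hCam'
  -- the difference of averages in terms of the integral of g
  have hfint₂ : IntegrableOn f (Metric.ball x r₂) volume := by
    refine Measure.integrableOn_of_bounded (M := B) measure_ball_lt_top.ne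
      hf.aestronglyMeasurable ?_
    refine (ae_restrict_iff' measurableSet_ball).mpr (ae_of_all _ fun y hy => ?_)
    exact hB y (hsub (hsub₂ hy))
  have hgint₂ : IntegrableOn g (Metric.ball x r₂) volume :=
    hfint₂.sub (integrableOn_const measure_ball_lt_top.ne)
  have hgI : (∫ y in Metric.ball x r₂, g y)
      = (∫ y in Metric.ball x r₂, f y) - v₂ * A₁ := by
    rw [hg_def]
    rw [integral_sub hfint₂ (integrableOn_const measure_ball_lt_top.ne)]
    simp [hv₂_def, mul_comm, Measure.real]
  have hA : ballAvg f x r₂ - A₁ = v₂⁻¹ * ∫ y in Metric.ball x r₂, g y := by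
    rw [hgI, ballAvg, ← hv₂_def]
    field_simp
  -- put everything together
  have habs : |A₁ - ballAvg f x r₂| ≤ v₂⁻¹ * (Real.sqrt S * Real.sqrt v₂) := by
    rw [abs_sub_comm, hA, abs_mul, abs_of_nonneg (inv_nonneg.mpr hv₂pos.le)]
    exact mul_le_mul_of_nonneg_left hI (inv_nonneg.mpr hv₂pos.le)
  have hstep : v₂⁻¹ * (Real.sqrt S * Real.sqrt v₂) ≤
      v₂⁻¹ * (Real.sqrt (C * r₁ ^ d / L ^ (2 * α)) * Real.sqrt v₂) := by
    have := Real.sqrt_le_sqrt hSle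
    gcongr
  -- algebraic identification of the right-hand side
  set δ : ℝ := (d : ℝ) / 2 with hδ_def
  have hsqrtpow : ∀ r : ℝ, 0 < r → Real.sqrt (r ^ d) = r ^ δ := by
    intro r hr
    rw [← Real.rpow_natCast r d, Real.sqrt_eq_rpow, ← Real.rpow_mul hr.le]
    congr 1
    rw [hδ_def]; ring
  have hsqrtL : Real.sqrt (L ^ (2 * α)) = L ^ α := by
    rw [Real.sqrt_eq_rpow, ← Real.rpow_mul hL.le]
    congr 1
    ring
  have hv₂eq : v₂ = r₂ ^ d * ωd := hvol r₂ hr₂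
  have hsv₂ : Real.sqrt v₂ = r₂ ^ δ * Real.sqrt ωd := by
    rw [hv₂eq, Real.sqrt_mul (by positivity), hsqrtpow r₂ hr₂]
  have hnum : Real.sqrt (C * r₁ ^ d / L ^ (2 * α))
      = Real.sqrt C * r₁ ^ δ / L ^ α := by
    rw [Real.sqrt_div (by positivity), Real.sqrt_mul hC.le, hsqrtpow r₁ hr₁pos, hsqrtL]
  have hLα : 0 < L ^ α := Real.rpow_pos_of_pos hL α
  have hr₂δ : 0 < r₂ ^ δ := Real.rpow_pos_of_pos hr₂ δ
  have hr₁δ : 0 < r₁ ^ δ := Real.rpow_pos_of_pos hr₁pos δ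
  have hsωd : 0 < Real.sqrt ωd := Real.sqrt_pos.mpr hωd
  have key : v₂⁻¹ * (Real.sqrt (C * r₁ ^ d / L ^ (2 * α)) * Real.sqrt v₂)
      = Real.sqrt (C / ωd) * (r₁ / r₂) ^ δ / L ^ α := by
    have hvv : v₂ = (r₂ ^ δ * Real.sqrt ωd) * (r₂ ^ δ * Real.sqrt ωd) := by
      rw [← hsv₂]; exact (Real.mul_self_sqrt hv₂pos.le).symm
    rw [hnum, hsv₂, hvv, Real.sqrt_div hC.le, Real.div_rpow hr₁pos.le hr₂.le]
    field_simp
  -- final estimate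
  have hfin : Real.sqrt (C / ωd) * (r₁ / r₂) ^ δ / L ^ α ≤
      (Real.sqrt (C / ωd) + 1) * (1 + (r₁ / r₂) ^ δ) / L ^ α := by
    have h7 : (0:ℝ) ≤ (r₁ / r₂) ^ δ := (Real.rpow_pos_of_pos (by positivity) δ).le
    have h8 : (0:ℝ) ≤ Real.sqrt (C / ωd) := Real.sqrt_nonneg _
    have := aux_mul_le (Real.sqrt (C / ωd)) ((r₁ / r₂) ^ δ) h8 h7
    exact (div_le_div_iff_of_pos_right hLα).mpr this

  calc |A₁ - ballAvg f x r₂| ≤ v₂⁻¹ * (Real.sqrt S * Real.sqrt v₂) := habs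
    _ ≤ v₂⁻¹ * (Real.sqrt (C * r₁ ^ d / L ^ (2 * α)) * Real.sqrt v₂) := hstep
    _ = Real.sqrt (C / ωd) * (r₁ / r₂) ^ δ / L ^ α := key
    _ ≤ (Real.sqrt (C / ωd) + 1) * (1 + (r₁ / r₂) ^ δ) / L ^ α := hfin
end

section
/- Let Ω ⊆ ℝ^d be open and let f : Ω → ℝ be bounded and Lebesgue measurable, satisfying the logarithmic Campanato condition with constants C > 0 and α > 1, i.e. ∫_{B_r(x)} |f(y) − f̄_{x,r}|² dy ≤ C r^d / |log₂ r|^{2α} for every x ∈ Ω and every 0 < r < 1/2 with B_r(x) ⊆ Ω, where f̄_{x,r} := (1/|B_r(x)|) ∫_{B_r(x)} f(y) dy. Then there is a constant C'' > 0 depending only on C, d and α such that for every x ∈ Ω and all radii 0 < ρ < r < min(dist(x, ∂Ω), 1/2), |f̄_{x,ρ} − f̄_{x,r}| ≤ C'' / |log₂ r|^{α−1}. -/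
open MeasureTheory

lemma bernoulli_aux {p t : ℝ} (hp : 0 < p) (ht : 0 ≤ t) (ht2 : t ≤ 1/2) :
    (1 + p * t) * (1 - t) ^ p ≤ 1 := by
  have h1 : 1 + p * t ≤ Real.exp (p * t) := by
    have := Real.add_one_le_exp (p * t); linarith
  have h2 : (1 - t) ^ p ≤ Real.exp (-t) ^ p := by
    apply Real.rpow_le_rpow (by linarith) _ hp.le
    have := Real.add_one_le_exp (-t); linarith
  have h3 : Real.exp (-t) ^ p = Real.exp (-(p * t)) := by
    rw [← Real.exp_mul]; ring_nf
  calc (1 + p * t) * (1 - t) ^ p ≤ Real.exp (p * t) * Real.exp (-(p * t)) := by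
        apply mul_le_mul h1 (h2.trans_eq h3) (Real.rpow_nonneg (by linarith) _) (Real.exp_pos _).le
    _ = 1 := by rw [← Real.exp_add]; simp

lemma tangent_aux {α : ℝ} (hα : 1 < α) {a : ℝ} (ha : 1 ≤ a) :
    (a + 1) ^ (-α) ≤ (a ^ (1 - α) - (a + 1) ^ (1 - α)) / (α - 1) := by
  have ha0 : (0:ℝ) < a := by linarith
  have hb0 : (0:ℝ) < a + 1 := by linarith
  set p := α - 1 with hp
  have hp0 : 0 < p := by rw [hp]; linarith
  have hP : (0:ℝ) < a ^ p := Real.rpow_pos_of_pos ha0 _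
  have hQ : (0:ℝ) < (a + 1) ^ p := Real.rpow_pos_of_pos hb0 _
  have ht2 : (a + 1)⁻¹ ≤ 1/2 := by
    rw [inv_le_comm₀ (by linarith) (by norm_num)]; linarith
  have hkey := bernoulli_aux hp0 (by positivity : (0:ℝ) ≤ (a+1)⁻¹) ht2
  have h1t : 1 - (a + 1)⁻¹ = a / (a + 1) := by field_simp; ring
  rw [h1t, Real.div_rpow ha0.le hb0.le, ← mul_div_assoc, div_le_one hQ] at hkey
  -- hkey : (1 + p * (a+1)⁻¹) * a ^ p ≤ (a+1) ^ p
  have h5 : (a + 1 + p) * a ^ p ≤ (a + 1) ^ p * (a + 1) := by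
    have h6 := mul_le_mul_of_nonneg_right hkey hb0.le
    have e : (1 + p * (a + 1)⁻¹) * a ^ p * (a + 1) = (a + 1 + p) * a ^ p := by
      field_simp
    linarith [e ▸ h6]
  rw [le_div_iff₀ (by rw [← hp] at *; exact hp0)]
  have eX : a ^ (1 - α) = (a ^ p)⁻¹ := by
    rw [show (1 - α) = -p by rw [hp]; ring, Real.rpow_neg ha0.le]
  have eY : (a + 1) ^ (1 - α) = ((a + 1) ^ p)⁻¹ := by
    rw [show (1 - α) = -p by rw [hp]; ring, Real.rpow_neg hb0.le]
  have eZ : (a + 1) ^ (-α) = ((a + 1) ^ p)⁻¹ * (a + 1)⁻¹ := by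
    rw [show (-α) = -p + (-1) by rw [hp]; ring, Real.rpow_add hb0, Real.rpow_neg hb0.le,
      Real.rpow_neg_one]
  rw [eX, eY, eZ, ← sub_nonneg]
  have expand : (a ^ p)⁻¹ - ((a + 1) ^ p)⁻¹ - ((a + 1) ^ p)⁻¹ * (a + 1)⁻¹ * (α - 1)
      = ((a + 1) ^ p * (a + 1) - a ^ p * (a + 1) - p * a ^ p) / (a ^ p * ((a + 1) ^ p) * (a + 1)) := by
    rw [← hp]
    field_simp
  rw [expand]
  apply div_nonneg _ (by positivity)
  nlinarith [h5]

lemma sum_aux {α L : ℝ} (hα : 1 < α) (hL : 1 ≤ L) (N : ℕ) :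
    ∑ k ∈ Finset.range (N + 1), (L + (k : ℝ)) ^ (-α) ≤ (1 + 1 / (α - 1)) * L ^ (1 - α) := by
  have hL0 : (0:ℝ) < L := by linarith
  have hα1 : (0:ℝ) < α - 1 := by linarith
  rw [Finset.sum_range_succ']
  have hstep : ∀ k : ℕ, (L + ((k : ℝ) + 1)) ^ (-α) ≤
      ((L + (k : ℝ)) ^ (1 - α) - (L + ((k : ℝ) + 1)) ^ (1 - α)) / (α - 1) := by
    intro k
    have hk : (1 : ℝ) ≤ L + (k : ℝ) := by
      have := Nat.cast_nonneg (α := ℝ) k; linarith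
    have h := tangent_aux hα hk
    have e : L + ((k : ℝ) + 1) = (L + (k : ℝ)) + 1 := by ring
    rw [e]; exact h
  have hsum1 : ∑ k ∈ Finset.range N, (L + ((k : ℝ) + 1)) ^ (-α) ≤
      (L ^ (1 - α) - (L + (N : ℝ)) ^ (1 - α)) / (α - 1) := by
    calc ∑ k ∈ Finset.range N, (L + ((k : ℝ) + 1)) ^ (-α)
        ≤ ∑ k ∈ Finset.range N,
            ((L + (k : ℝ)) ^ (1 - α) - (L + ((k : ℝ) + 1)) ^ (1 - α)) / (α - 1) :=
          Finset.sum_le_sum fun k _ => hstep k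
      _ = (∑ k ∈ Finset.range N,
            ((fun j : ℕ => (L + (j : ℝ)) ^ (1 - α)) k
              - (fun j : ℕ => (L + (j : ℝ)) ^ (1 - α)) (k + 1))) / (α - 1) := by
          rw [Finset.sum_div]
          apply Finset.sum_congr rfl
          intro k _
          simp only []
          push_cast
          ring_nf
      _ = (L ^ (1 - α) - (L + (N : ℝ)) ^ (1 - α)) / (α - 1) := by
          rw [Finset.sum_range_sub' (fun j : ℕ => (L + (j : ℝ)) ^ (1 - α))]
          push_cast
          norm_num
  have h0 : L ^ (-α) ≤ L ^ (1 - α) :=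
    Real.rpow_le_rpow_of_exponent_le hL (by linarith)
  have htail : (L ^ (1 - α) - (L + (N : ℝ)) ^ (1 - α)) / (α - 1) ≤ L ^ (1 - α) / (α - 1) := by
    gcongr
    exact sub_le_self _ (Real.rpow_nonneg (by positivity) _)
  have hfin : (1 + 1 / (α - 1)) * L ^ (1 - α) = L ^ (1 - α) / (α - 1) + L ^ (1 - α) := by
    field_simp
    ring
  rw [hfin]
  push_cast
  rw [add_zero]
  have := hsum1.trans htail
  linarith

lemma step_est {d : ℕ} {f : EuclideanSpace ℝ (Fin d) → ℝ} (hf : Measurable f)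
    {x : EuclideanSpace ℝ (Fin d)} {ρ s B : ℝ} (hρ : 0 < ρ) (hρs : ρ ≤ s)
    (hB : ∀ y ∈ Metric.ball x s, |f y| ≤ B) :
    |ballAvg f x ρ - ballAvg f x s| ≤
      Real.sqrt ((∫ y in Metric.ball x s, (f y - ballAvg f x s) ^ 2) /
        (volume (Metric.ball x ρ)).toReal) := by
  set m := ballAvg f x s with hm
  set v := (volume (Metric.ball x ρ)).toReal with hvdef
  have hsub : Metric.ball x ρ ⊆ Metric.ball x s := Metric.ball_subset_ball hρs
  have hv : 0 < v :=
    ENNReal.toReal_pos (Metric.measure_ball_pos volume x hρ).ne' measure_ball_lt_top.ne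
  have hMbd : ∀ᵐ y ∂volume.restrict (Metric.ball x s), ‖f y - m‖ ≤ B + |m| := by
    filter_upwards [ae_restrict_mem measurableSet_ball] with y hy
    have h1 := hB y hy
    have h2 : |f y - m| ≤ |f y| + |m| :=
      (abs_add_le (f y) (-m)).trans_eq (by rw [abs_neg]) |>.trans_eq' (by rw [sub_eq_add_neg])
    rw [Real.norm_eq_abs]
    linarith
  have hgm : Measurable fun y => f y - m := hf.sub measurable_const
  have hint_s : IntegrableOn (fun y => f y - m) (Metric.ball x s) :=
    Measure.integrableOn_of_bounded measure_ball_lt_top.ne hgm.aestronglyMeasurable hMbd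
  have hBnn : 0 ≤ B + |m| := by
    have := hB x (Metric.mem_ball_self (hρ.trans_le hρs))
    have := abs_nonneg (f x); have := abs_nonneg m; linarith
  have hint_sq : IntegrableOn (fun y => (f y - m) ^ 2) (Metric.ball x s) := by
    apply Measure.integrableOn_of_bounded (M := (B + |m|) ^ 2) measure_ball_lt_top.ne
      (hgm.pow_const 2).aestronglyMeasurable
    filter_upwards [hMbd] with y hy
    rw [Real.norm_eq_abs, abs_pow]
    rw [Real.norm_eq_abs] at hy
    exact pow_le_pow_left₀ (abs_nonneg _) hy 2
  have hint_ρ : IntegrableOn (fun y => f y - m) (Metric.ball x ρ) := hint_s.mono_set hsub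
  have hconst : IntegrableOn (fun _ : EuclideanSpace ℝ (Fin d) => m) (Metric.ball x ρ) volume :=
    integrableOn_const measure_ball_lt_top.ne
  have hfρ : IntegrableOn f (Metric.ball x ρ) := by
    have h := hint_ρ.add hconst
    have e : ((fun y => f y - m) + fun _ => m) = f := by funext y; simp
    rwa [e] at h
  -- step 1 : difference of averages as integral
  have e1 : ∫ y in Metric.ball x ρ, (f y - m) = (∫ y in Metric.ball x ρ, f y) - v * m := by
    rw [integral_sub hfρ hconst, setIntegral_const, smul_eq_mul]; rfl
  have h1 : ballAvg f x ρ - m = v⁻¹ * ∫ y in Metric.ball x ρ, (f y - m) := by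
    rw [e1, mul_sub, ballAvg, ← hvdef, inv_mul_cancel_left₀ hv.ne']
  -- step 2 : Cauchy-Schwarz on the small ball
  haveI hfin : IsFiniteMeasure (volume.restrict (Metric.ball x ρ)) :=
    ⟨by rw [Measure.restrict_apply_univ]; exact measure_ball_lt_top⟩
  have hconj : Real.HolderConjugate 2 2 := Real.holderConjugate_iff.mpr ⟨one_lt_two, by norm_num⟩
  have hmem : MemLp (fun y => |f y - m|) (ENNReal.ofReal 2)
      (volume.restrict (Metric.ball x ρ)) := by
    apply MemLp.of_bound (hgm.abs).aestronglyMeasurable (B + |m|)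
    filter_upwards [ae_restrict_mem measurableSet_ball] with y hy
    rw [Real.norm_eq_abs, abs_abs]
    have h1 := hB y (hsub hy)
    have h2 : |f y - m| ≤ |f y| + |m| :=
      (abs_add_le (f y) (-m)).trans_eq (by rw [abs_neg]) |>.trans_eq' (by rw [sub_eq_add_neg])
    linarith
  have hmem1 : MemLp (fun _ => (1:ℝ)) (ENNReal.ofReal 2)
      (volume.restrict (Metric.ball x ρ)) := memLp_const 1
  have hCS := integral_mul_le_Lp_mul_Lq_of_nonneg hconj
    (f := fun y => |f y - m|) (g := fun _ => (1:ℝ))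
    (Filter.Eventually.of_forall fun y => abs_nonneg _) (Filter.Eventually.of_forall fun _ => zero_le_one)
    hmem hmem1
  simp only [mul_one, Real.one_rpow] at hCS
  rw [integral_const, measureReal_restrict_apply_univ, smul_eq_mul, mul_one] at hCS
  -- hCS : ∫ |f-m| ≤ (∫ |f-m|^(2:ℝ))^(1/2) * v^(1/2)
  have e2 : (∫ y in Metric.ball x ρ, |f y - m| ^ (2:ℝ))
      = ∫ y in Metric.ball x ρ, (f y - m) ^ 2 := by
    apply integral_congr_ae
    apply Filter.Eventually.of_forall
    intro y
    show |f y - m| ^ (2:ℝ) = (f y - m) ^ 2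
    rw [show (2:ℝ) = ((2:ℕ):ℝ) by norm_num, Real.rpow_natCast, sq_abs]
  rw [e2] at hCS
  have hIρ0 : 0 ≤ ∫ y in Metric.ball x ρ, (f y - m) ^ 2 :=
    setIntegral_nonneg measurableSet_ball fun y _ => sq_nonneg _
  have hIs0 : 0 ≤ ∫ y in Metric.ball x s, (f y - m) ^ 2 :=
    setIntegral_nonneg measurableSet_ball fun y _ => sq_nonneg _
  rw [← Real.sqrt_eq_rpow, ← Real.sqrt_eq_rpow] at hCS
  -- monotonicity in the domain
  have h3 : (∫ y in Metric.ball x ρ, (f y - m) ^ 2) ≤ ∫ y in Metric.ball x s, (f y - m) ^ 2 :=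
    setIntegral_mono_set hint_sq (Filter.Eventually.of_forall fun y => sq_nonneg _)
      (HasSubset.Subset.eventuallyLE hsub)
  -- put things together
  have h4 : |∫ y in Metric.ball x ρ, (f y - m)| ≤ ∫ y in Metric.ball x ρ, |f y - m| := by
    simpa [Real.norm_eq_abs] using
      norm_integral_le_integral_norm (μ := volume.restrict (Metric.ball x ρ)) fun y => f y - m
  set I := ∫ y in Metric.ball x s, (f y - m) ^ 2 with hI
  have key : |ballAvg f x ρ - m| ≤ v⁻¹ * (Real.sqrt I * Real.sqrt v) := by
    rw [h1, abs_mul, abs_of_nonneg (inv_nonneg.2 hv.le)]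
    apply mul_le_mul_of_nonneg_left _ (inv_nonneg.2 hv.le)
    calc |∫ y in Metric.ball x ρ, (f y - m)|
        ≤ ∫ y in Metric.ball x ρ, |f y - m| := h4
      _ ≤ Real.sqrt (∫ y in Metric.ball x ρ, (f y - m) ^ 2) * Real.sqrt v := hCS
      _ ≤ Real.sqrt I * Real.sqrt v := by
          apply mul_le_mul_of_nonneg_right (Real.sqrt_le_sqrt h3) (Real.sqrt_nonneg _)
  have efin : v⁻¹ * (Real.sqrt I * Real.sqrt v) = Real.sqrt (I / v) := by
    rw [Real.sqrt_div hIs0]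
    set w := Real.sqrt v with hw
    have hww : w * w = v := Real.mul_self_sqrt hv.le
    have hw0 : 0 < w := Real.sqrt_pos.2 hv
    rw [← hww]
    field_simp
  rw [← efin]
  exact key

theorem campanato_dyadic_telescoping
    (d : ℕ) (C α : ℝ) (hC : 0 < C) (hα : 1 < α) :
    ∃ C'' > (0 : ℝ),
      ∀ (Ω : Set (EuclideanSpace ℝ (Fin d))), IsOpen Ω →
      ∀ (f : EuclideanSpace ℝ (Fin d) → ℝ), Measurable f →
        (∃ B, ∀ x ∈ Ω, |f x| ≤ B) →
        (∀ x ∈ Ω, ∀ r : ℝ, 0 < r → r < 1 / 2 → Metric.ball x r ⊆ Ω →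
          ∫ y in Metric.ball x r, (f y - ballAvg f x r) ^ 2 ≤
            C * r ^ d / |Real.logb 2 r| ^ (2 * α)) →
        ∀ x ∈ Ω, ∀ ρ r : ℝ, 0 < ρ → ρ < r →
          r < min (Metric.infDist x (frontier Ω)) (1 / 2) →
          |ballAvg f x ρ - ballAvg f x r| ≤ C'' / |Real.logb 2 r| ^ (α - 1) := by
  have hα1 : (0:ℝ) < α - 1 := by linarith
  set ω := (volume (Metric.ball (0 : EuclideanSpace ℝ (Fin d)) 1)).toReal with hωdef
  have hω0 : 0 < ω :=
    ENNReal.toReal_pos (Metric.measure_ball_pos volume _ one_pos).ne' measure_ball_lt_top.ne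
  set K := Real.sqrt (C * 2 ^ d / ω) with hKdef
  have hK0 : 0 < K := Real.sqrt_pos.2 (by positivity)
  refine ⟨(1 + 1 / (α - 1)) * K, by positivity, ?_⟩
  intro Ω hΩ f hf hBex hCam x hx ρ r hρ hρr hrmin
  obtain ⟨B, hB⟩ := hBex
  have hr0 : 0 < r := hρ.trans hρr
  have hr2 : r < 1 / 2 := hrmin.trans_le (min_le_right _ _)
  have hrd : r < Metric.infDist x (frontier Ω) := hrmin.trans_le (min_le_left _ _)
  -- the ball of radius r is contained in Ω
  have hball : Metric.ball x r ⊆ Ω := by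
    apply (convex_ball x r).isPreconnected.subset_of_closure_inter_subset hΩ
      ⟨x, Metric.mem_ball_self hr0, hx⟩
    rintro z ⟨hz1, hz2⟩
    by_contra hzΩ
    have hzf : z ∈ frontier Ω := ⟨hz1, by rwa [hΩ.interior_eq]⟩
    have h1 := Metric.infDist_le_dist_of_mem (x := x) hzf
    have h2 : dist x z < r := by rw [dist_comm]; exact Metric.mem_ball.1 hz2
    linarith
  -- logs
  have hlog_neg : ∀ s : ℝ, 0 < s → s < 1/2 → Real.logb 2 s < -1 := by
    intro s hs0 hs2
    have h1 : Real.logb 2 s < Real.logb 2 (1/2) := Real.logb_lt_logb one_lt_two hs0 hs2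
    have h2 : Real.logb 2 (1/2 : ℝ) = -1 := by
      rw [show (1/2 : ℝ) = 2⁻¹ by norm_num, Real.logb_inv, Real.logb_self_eq_one one_lt_two]
    linarith
  set L := |Real.logb 2 r| with hLdef
  have hlogr := hlog_neg r hr0 hr2
  have hL1 : 1 < L := by rw [hLdef, abs_of_neg (by linarith)]; linarith
  have hL0 : 0 < L := by linarith
  have hlogk : ∀ k : ℕ, |Real.logb 2 (r / 2 ^ k)| = L + k := by
    intro k
    have h2k : (0:ℝ) < 2 ^ k := by positivity
    rw [Real.logb_div hr0.ne' h2k.ne', Real.logb_pow, Real.logb_self_eq_one one_lt_two, mul_one]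
    rw [abs_of_neg (by have : (0:ℝ) ≤ (k:ℝ) := Nat.cast_nonneg k; linarith),
      hLdef, abs_of_neg (by linarith)]
    ring
  -- the one-step estimate
  have claim : ∀ s ρ' : ℝ, 0 < ρ' → ρ' ≤ s → s ≤ 2 * ρ' → s < 1/2 → Metric.ball x s ⊆ Ω →
      |ballAvg f x ρ' - ballAvg f x s| ≤ K / |Real.logb 2 s| ^ α := by
    intro s ρ' hρ'0 hρ's hs2ρ hshalf hsΩ
    have hs0 : 0 < s := hρ'0.trans_le hρ's
    have hLs1 : 1 < |Real.logb 2 s| := by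
      have := hlog_neg s hs0 hshalf
      rw [abs_of_neg (by linarith)]; linarith
    have hLs0 : 0 < |Real.logb 2 s| := by linarith
    have hBs : ∀ y ∈ Metric.ball x s, |f y| ≤ B := fun y hy => hB y (hsΩ hy)
    have h1 := step_est hf hρ'0 hρ's hBs
    have hI0 : 0 ≤ ∫ y in Metric.ball x s, (f y - ballAvg f x s) ^ 2 :=
      setIntegral_nonneg measurableSet_ball fun y _ => sq_nonneg _
    have hIle := hCam x hx s hs0 hshalf hsΩ
    have hv : (volume (Metric.ball x ρ')).toReal = ρ' ^ d * ω := by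
      rw [Measure.addHaar_ball_of_pos volume x hρ'0, ENNReal.toReal_mul,
        ENNReal.toReal_ofReal (by positivity), finrank_euclideanSpace_fin, hωdef]
    have hvge : (s / 2) ^ d * ω ≤ (volume (Metric.ball x ρ')).toReal := by
      rw [hv]
      exact mul_le_mul_of_nonneg_right
        (pow_le_pow_left₀ (by positivity) (by linarith) d) hω0.le
    have hfrac : (∫ y in Metric.ball x s, (f y - ballAvg f x s) ^ 2) /
        (volume (Metric.ball x ρ')).toReal
        ≤ (C * 2 ^ d / ω) / |Real.logb 2 s| ^ (2 * α) := by
      have h5 := div_le_div₀ (by positivity) hIle (by positivity : (0:ℝ) < (s/2)^d * ω) hvge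
      refine h5.trans (le_of_eq ?_)
      have hpow0 : (0:ℝ) < |Real.logb 2 s| ^ (2*α) := Real.rpow_pos_of_pos hLs0 _
      rw [div_pow]
      field_simp
    calc |ballAvg f x ρ' - ballAvg f x s|
        ≤ Real.sqrt ((∫ y in Metric.ball x s, (f y - ballAvg f x s) ^ 2) /
            (volume (Metric.ball x ρ')).toReal) := h1
      _ ≤ Real.sqrt ((C * 2 ^ d / ω) / |Real.logb 2 s| ^ (2 * α)) := Real.sqrt_le_sqrt hfrac
      _ = K / |Real.logb 2 s| ^ α := by
          rw [Real.sqrt_div (by positivity) _, hKdef]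
          congr 1
          rw [show 2 * α = α * 2 by ring, Real.rpow_mul (abs_nonneg _) α 2,
            show ((2:ℝ)) = ((2:ℕ):ℝ) by norm_num, Real.rpow_natCast,
            Real.sqrt_sq (Real.rpow_nonneg (abs_nonneg _) _)]
  -- choice of N
  have hex : ∃ n : ℕ, r / 2 ^ n ≤ ρ := by
    obtain ⟨n, hn⟩ := pow_unbounded_of_one_lt (r / ρ) (one_lt_two (α := ℝ))
    refine ⟨n, ?_⟩
    rw [div_le_iff₀ (by positivity)]
    rw [div_lt_iff₀ hρ] at hn
    nlinarith
  set N' := Nat.find hex with hN'def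
  have hN'spec : r / 2 ^ N' ≤ ρ := Nat.find_spec hex
  have hN'0 : N' ≠ 0 := by
    intro h0
    rw [h0, pow_zero, div_one] at hN'spec
    linarith
  obtain ⟨N, hNN⟩ : ∃ N, N' = N + 1 :=
    ⟨N' - 1, (Nat.succ_pred_eq_of_pos (Nat.pos_of_ne_zero hN'0)).symm⟩
  have hN1 : r / 2 ^ (N + 1) ≤ ρ := by rw [← hNN]; exact hN'spec
  have hN2 : ρ < r / 2 ^ N := by
    have h := Nat.find_min hex (by omega : N < N')
    exact lt_of_not_ge h
  -- dyadic radii facts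
  have hrk_pos : ∀ k : ℕ, 0 < r / 2 ^ k := fun k => by positivity
  have hrk_le : ∀ k : ℕ, r / 2 ^ k ≤ r := fun k =>
    div_le_self hr0.le (one_le_pow₀ one_le_two)
  have hrk_half : ∀ k : ℕ, r / 2 ^ k < 1/2 := fun k => (hrk_le k).trans_lt hr2
  have hrk_sub : ∀ k : ℕ, Metric.ball x (r / 2 ^ k) ⊆ Ω := fun k =>
    (Metric.ball_subset_ball (hrk_le k)).trans hball
  have htwo : ∀ k : ℕ, 2 * (r / 2 ^ (k+1)) = r / 2 ^ k := by
    intro k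
    rw [pow_succ]
    field_simp
  -- the telescoping steps
  have hstep : ∀ k : ℕ, |ballAvg f x (r / 2 ^ k) - ballAvg f x (r / 2 ^ (k+1))|
      ≤ K * (L + k) ^ (-α) := by
    intro k
    have h1 : |ballAvg f x (r / 2 ^ (k+1)) - ballAvg f x (r / 2 ^ k)|
        ≤ K / |Real.logb 2 (r / 2 ^ k)| ^ α := by
      apply claim (r / 2 ^ k) (r / 2 ^ (k+1)) (hrk_pos _) ?_ ?_ (hrk_half k) (hrk_sub k)
      · apply div_le_div_of_nonneg_left hr0.le (by positivity)
        exact pow_le_pow_right₀ one_le_two (Nat.le_succ k)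
      · rw [htwo k]
    rw [hlogk k] at h1
    rw [abs_sub_comm] at h1
    rw [Real.rpow_neg (by positivity), ← div_eq_mul_inv]
    exact h1
  have hlast : |ballAvg f x ρ - ballAvg f x (r / 2 ^ N)| ≤ K * (L + N) ^ (-α) := by
    have h1 : |ballAvg f x ρ - ballAvg f x (r / 2 ^ N)|
        ≤ K / |Real.logb 2 (r / 2 ^ N)| ^ α := by
      apply claim (r / 2 ^ N) ρ hρ hN2.le ?_ (hrk_half N) (hrk_sub N)
      have := hN1
      rw [← htwo N]
      linarith
    rw [hlogk N] at h1
    rw [Real.rpow_neg (by positivity), ← div_eq_mul_inv]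
    exact h1
  -- telescoping
  have htel : |ballAvg f x ρ - ballAvg f x r|
      ≤ (∑ k ∈ Finset.range N, |ballAvg f x (r / 2 ^ k) - ballAvg f x (r / 2 ^ (k+1))|)
        + |ballAvg f x ρ - ballAvg f x (r / 2 ^ N)| := by
    have h0 : ballAvg f x r = ballAvg f x (r / 2 ^ 0) := by norm_num
    rw [h0]
    have hd1 : dist (ballAvg f x ρ) (ballAvg f x (r / 2 ^ 0))
        ≤ dist (ballAvg f x ρ) (ballAvg f x (r / 2 ^ N))
          + dist (ballAvg f x (r / 2 ^ N)) (ballAvg f x (r / 2 ^ 0)) :=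
      dist_triangle _ _ _
    have hd2 : dist (ballAvg f x (r / 2 ^ 0)) (ballAvg f x (r / 2 ^ N))
        ≤ ∑ k ∈ Finset.range N,
            dist (ballAvg f x (r / 2 ^ k)) (ballAvg f x (r / 2 ^ (k+1))) := by
      have := dist_le_range_sum_dist (fun k : ℕ => ballAvg f x (r / 2 ^ k)) N
      simpa using this
    rw [Real.dist_eq] at hd1
    rw [dist_comm (ballAvg f x (r / 2 ^ N))] at hd1
    calc |ballAvg f x ρ - ballAvg f x (r / 2 ^ 0)|
        ≤ dist (ballAvg f x ρ) (ballAvg f x (r / 2 ^ N))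
          + dist (ballAvg f x (r / 2 ^ 0)) (ballAvg f x (r / 2 ^ N)) := hd1
      _ ≤ dist (ballAvg f x ρ) (ballAvg f x (r / 2 ^ N))
          + ∑ k ∈ Finset.range N,
              dist (ballAvg f x (r / 2 ^ k)) (ballAvg f x (r / 2 ^ (k+1))) := by linarith
      _ = (∑ k ∈ Finset.range N, |ballAvg f x (r / 2 ^ k) - ballAvg f x (r / 2 ^ (k+1))|)
          + |ballAvg f x ρ - ballAvg f x (r / 2 ^ N)| := by
          rw [add_comm]
          simp only [Real.dist_eq]
  -- summation
  have hsum : (∑ k ∈ Finset.range N, |ballAvg f x (r / 2 ^ k) - ballAvg f x (r / 2 ^ (k+1))|)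
      + |ballAvg f x ρ - ballAvg f x (r / 2 ^ N)|
      ≤ ∑ k ∈ Finset.range (N + 1), K * (L + (k:ℝ)) ^ (-α) := by
    rw [Finset.sum_range_succ]
    exact add_le_add (Finset.sum_le_sum fun k _ => hstep k) hlast
  have hbound := sum_aux hα hL1.le N
  calc |ballAvg f x ρ - ballAvg f x r|
      ≤ ∑ k ∈ Finset.range (N + 1), K * (L + (k:ℝ)) ^ (-α) := htel.trans hsum
    _ = K * ∑ k ∈ Finset.range (N + 1), (L + (k:ℝ)) ^ (-α) := by rw [Finset.mul_sum]
    _ ≤ K * ((1 + 1 / (α - 1)) * L ^ (1 - α)) := by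
        apply mul_le_mul_of_nonneg_left hbound hK0.le
    _ = (1 + 1 / (α - 1)) * K / L ^ (α - 1) := by
        rw [show (1 - α) = -(α - 1) by ring, Real.rpow_neg hL0.le, div_eq_mul_inv]
        ring
end

section
/- Let Ω ⊆ ℝ^d be open and let f : Ω → ℝ be bounded and Lebesgue measurable, satisfying the logarithmic Campanato condition with constants C > 0 and α > 1, i.e. ∫_{B_r(x)} |f(y) − f̄_{x,r}|² dy ≤ C r^d / |log₂ r|^{2α} for every x ∈ Ω and every 0 < r < 1/2 with B_r(x) ⊆ Ω, where f̄_{x,r} := (1/|B_r(x)|) ∫_{B_r(x)} f(y) dy. Then there is a constant C''' > 0 depending only on C and d such that for all x, y ∈ Ω with x ≠ y, writing r := |x − y|, if 2r < 1/2 and the balls B_{2r}(x) and B_{2r}(y) are contained in Ω, then |f̄_{x,2r} − f̄_{y,2r}| ≤ C''' / |log₂ r|^{α}. -/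
open MeasureTheory

/-- Cauchy–Schwarz for integrals: `∫ |g| ≤ √(μ univ) · √(∫ g²)`. -/
lemma cs_helper {X : Type*} [MeasurableSpace X] (μ : Measure X) [IsFiniteMeasure μ] (g : X → ℝ)
    (hg : MemLp g 2 μ) :
    ∫ a, |g a| ∂μ ≤ Real.sqrt (μ Set.univ).toReal * Real.sqrt (∫ a, (g a)^2 ∂μ) := by
  have hpq : (2:ℝ).HolderConjugate 2 := Real.HolderConjugate.two_two
  have h := integral_mul_le_Lp_mul_Lq_of_nonneg (μ := μ) hpq
    (f := fun a => |g a|) (g := fun _ => (1:ℝ))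
    (Filter.Eventually.of_forall fun a => abs_nonneg _)
    (Filter.Eventually.of_forall fun a => zero_le_one)
    (by norm_num; exact hg.abs) (by norm_num; exact memLp_const 1)
  simp only [mul_one] at h
  have e1 : ∀ a : X, |g a| ^ (2:ℝ) = (g a)^2 := fun a => by
    rw [show ((2:ℝ)) = ((2:ℕ):ℝ) by norm_num, Real.rpow_natCast, sq_abs]
  have e2 : ∫ a, |g a| ^ (2:ℝ) ∂μ = ∫ a, (g a)^2 ∂μ := by simp_rw [e1]
  have e3 : ∫ a, (1:ℝ)^(2:ℝ) ∂μ = (μ Set.univ).toReal := by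
    simp [Real.one_rpow]; rfl
  rw [e2, e3] at h
  calc ∫ a, |g a| ∂μ ≤ (∫ a, (g a)^2 ∂μ) ^ ((1:ℝ)/2) * ((μ Set.univ).toReal) ^ ((1:ℝ)/2) := h
    _ = Real.sqrt (μ Set.univ).toReal * Real.sqrt (∫ a, (g a)^2 ∂μ) := by
        rw [← Real.sqrt_eq_rpow, ← Real.sqrt_eq_rpow, mul_comm]

theorem campanato_averages_nearby_points
    (d : ℕ) (C α : ℝ) (hC : 0 < C) (hα : 1 < α) :
    ∃ C''' > (0 : ℝ),
      ∀ (Ω : Set (EuclideanSpace ℝ (Fin d))), IsOpen Ω →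
      ∀ (f : EuclideanSpace ℝ (Fin d) → ℝ), Measurable f →
        (∃ B, ∀ x ∈ Ω, |f x| ≤ B) →
        (∀ x ∈ Ω, ∀ r : ℝ, 0 < r → r < 1 / 2 → Metric.ball x r ⊆ Ω →
          ∫ y in Metric.ball x r, (f y - ballAvg f x r) ^ 2 ≤
            C * r ^ d / |Real.logb 2 r| ^ (2 * α)) →
        ∀ x ∈ Ω, ∀ y ∈ Ω, x ≠ y →
          2 * dist x y < 1 / 2 →
          Metric.ball x (2 * dist x y) ⊆ Ω → Metric.ball y (2 * dist x y) ⊆ Ω →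
          |ballAvg f x (2 * dist x y) - ballAvg f y (2 * dist x y)| ≤
            C''' / |Real.logb 2 (dist x y)| ^ α := by
  set E := EuclideanSpace ℝ (Fin d)
  set cd : ℝ := (volume (Metric.ball (0 : E) 1)).toReal with hcd_def
  have hcd : 0 < cd := ENNReal.toReal_pos
    (Metric.measure_ball_pos _ _ one_pos).ne' measure_ball_lt_top.ne
  have hα0 : (0:ℝ) ≤ α := by linarith
  refine ⟨2^(d+1) * (2:ℝ)^α * Real.sqrt (C / cd), by positivity, ?_⟩
  intro Ω hΩ f hf ⟨B, hB⟩ hCam x hx y hy hxy h2r hbx hby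
  set r : ℝ := dist x y with hr_def
  have hr : 0 < r := dist_pos.2 hxy
  have hr4 : r < 1/4 := by linarith
  set R : ℝ := 2 * r with hR_def
  have hR : 0 < R := by positivity
  have hR2 : R < 1/2 := h2r
  -- log estimates
  have hlogr : Real.logb 2 r < -2 := by
    have h1 : Real.logb 2 r < Real.logb 2 (1/4) :=
      Real.logb_lt_logb (b := 2) (by norm_num) hr (by linarith)
    have h2 : Real.logb 2 (1/4 : ℝ) = -2 := by
      rw [show (1/4 : ℝ) = 2 ^ (-2 : ℝ) by norm_num,
        Real.logb_rpow (by norm_num : (0:ℝ) < 2) (by norm_num)]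
    linarith
  have hlogR : Real.logb 2 R = 1 + Real.logb 2 r := by
    rw [hR_def, Real.logb_mul (by norm_num) hr.ne',
      show Real.logb 2 2 = 1 by simp]
  set L : ℝ := |Real.logb 2 r| with hL_def
  have hL_eq : L = -Real.logb 2 r := abs_of_neg (by linarith)
  have hL2 : 2 < L := by rw [hL_eq]; linarith
  set M : ℝ := |Real.logb 2 R| with hM_def
  have hM_eq : M = L - 1 := by rw [hM_def, hlogR, hL_eq, abs_of_neg (by linarith)]; ring
  have hM_pos : 0 < M := by rw [hM_eq]; linarith
  have hML : L ≤ 2 * M := by rw [hM_eq]; linarith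
  -- volume computations
  have hvol : ∀ (z : E) (ρ : ℝ), 0 < ρ → (volume (Metric.ball z ρ)).toReal = ρ ^ d * cd := by
    intro z ρ hρ
    rw [Measure.addHaar_ball_of_pos volume z hρ, finrank_euclideanSpace_fin,
      ENNReal.toReal_mul, ENNReal.toReal_ofReal (by positivity)]
  -- integrability on balls
  have hint : ∀ (z : E) (A : ℝ), Metric.ball z R ⊆ Ω →
      MemLp (fun w => f w - A) 2 (volume.restrict (Metric.ball z R)) := by
    intro z A hbz
    have hfin : IsFiniteMeasure (volume.restrict (Metric.ball z R)) :=
      ⟨by rw [Measure.restrict_apply_univ]; exact measure_ball_lt_top⟩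
    refine MemLp.of_bound ((hf.sub measurable_const).aestronglyMeasurable) (B + |A|) ?_
    refine ae_restrict_of_forall_mem measurableSet_ball fun w hw => ?_
    have : |f w| ≤ B := hB w (hbz hw)
    calc ‖f w - A‖ = |f w - A| := rfl
      _ ≤ |f w| + |A| := abs_sub _ _
      _ ≤ B + |A| := by linarith
  -- key estimate for a single center
  have key : ∀ z : E, z ∈ Ω → Metric.ball z R ⊆ Ω →
      ∫ w in Metric.ball z R, |f w - ballAvg f z R| ≤
        Real.sqrt cd * Real.sqrt C * R ^ d / M ^ α := by
    intro z hz hbz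
    set A := ballAvg f z R with hA_def
    set s := Metric.ball z R with hs_def
    have hfin : IsFiniteMeasure (volume.restrict s) :=
      ⟨by rw [Measure.restrict_apply_univ]; exact measure_ball_lt_top⟩
    have hcs := cs_helper (volume.restrict s) (fun w => f w - A) (hint z A hbz)
    rw [Measure.restrict_apply_univ] at hcs
    have hcam := hCam z hz R hR hR2 hbz
    have hM2 : |Real.logb 2 R| ^ (2 * α) = (M ^ α) ^ 2 := by
      rw [← hM_def, sq, ← Real.rpow_add hM_pos]; ring_nf
    have hMα : (0:ℝ) < M ^ α := Real.rpow_pos_of_pos hM_pos α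
    have hsqrt2 : Real.sqrt (∫ w in s, (f w - A)^2) ≤
        Real.sqrt C * Real.sqrt (R ^ d) / M ^ α := by
      have h1 : Real.sqrt (∫ w in s, (f w - A)^2) ≤
          Real.sqrt (C * R ^ d / (M ^ α)^2) := by
        apply Real.sqrt_le_sqrt; rw [← hM2]; exact hcam
      rwa [Real.sqrt_div' _ (by positivity), Real.sqrt_sq hMα.le,
        Real.sqrt_mul hC.le] at h1
    have hvols : (volume s).toReal = R ^ d * cd := hvol z R hR
    calc ∫ w in s, |f w - A| ≤
        Real.sqrt (volume s).toReal * Real.sqrt (∫ w in s, (f w - A)^2) := hcs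
      _ ≤ Real.sqrt (R ^ d * cd) * (Real.sqrt C * Real.sqrt (R ^ d) / M ^ α) := by
          rw [hvols]
          exact mul_le_mul_of_nonneg_left hsqrt2 (Real.sqrt_nonneg _)
      _ = Real.sqrt cd * Real.sqrt C * R ^ d / M ^ α := by
          rw [Real.sqrt_mul (by positivity)]
          rw [show Real.sqrt (R^d) * Real.sqrt cd * (Real.sqrt C * Real.sqrt (R^d) / M ^ α)
            = Real.sqrt cd * Real.sqrt C * (Real.sqrt (R^d) * Real.sqrt (R^d)) / M ^ α by ring]
          rw [Real.mul_self_sqrt (by positivity)]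
  -- the intersection ball
  set m : E := midpoint ℝ x y with hm_def
  set S : Set E := Metric.ball m r with hS_def
  have hdxm : dist x m = r / 2 := by
    rw [hm_def, dist_left_midpoint (𝕜 := ℝ)]
    rw [hr_def]; norm_num; ring
  have hdym : dist y m = r / 2 := by
    rw [hm_def, dist_right_midpoint (𝕜 := ℝ)]
    rw [hr_def]; norm_num; ring
  have hSx : S ⊆ Metric.ball x R := by
    intro w hw
    rw [hS_def, Metric.mem_ball] at hw
    rw [Metric.mem_ball]
    calc dist w x ≤ dist w m + dist m x := dist_triangle _ _ _
      _ = dist w m + r / 2 := by rw [dist_comm m x, hdxm]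
      _ < r + r / 2 := by linarith
      _ ≤ R := by rw [hR_def]; linarith
  have hSy : S ⊆ Metric.ball y R := by
    intro w hw
    rw [hS_def, Metric.mem_ball] at hw
    rw [Metric.mem_ball]
    calc dist w y ≤ dist w m + dist m y := dist_triangle _ _ _
      _ = dist w m + r / 2 := by rw [dist_comm m y, hdym]
      _ < r + r / 2 := by linarith
      _ ≤ R := by rw [hR_def]; linarith
  set Ax := ballAvg f x R with hAx_def
  set Ay := ballAvg f y R with hAy_def
  haveI : IsFiniteMeasure (volume.restrict (Metric.ball x R)) :=
    ⟨by rw [Measure.restrict_apply_univ]; exact measure_ball_lt_top⟩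
  haveI : IsFiniteMeasure (volume.restrict (Metric.ball y R)) :=
    ⟨by rw [Measure.restrict_apply_univ]; exact measure_ball_lt_top⟩
  have hintx : IntegrableOn (fun w => f w - Ax) (Metric.ball x R) volume :=
    (hint x Ax hbx).integrable (by norm_num)
  have hinty : IntegrableOn (fun w => f w - Ay) (Metric.ball y R) volume :=
    (hint y Ay hby).integrable (by norm_num)
  have hintSx : IntegrableOn (fun w => f w - Ax) S volume := hintx.mono_set hSx
  have hintSy : IntegrableOn (fun w => f w - Ay) S volume := hinty.mono_set hSy
  have hvS : (volume S).toReal = r ^ d * cd := hvol m r hr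
  have hvS_pos : 0 < (volume S).toReal := by rw [hvS]; positivity
  -- main triangle inequality
  have htri : (volume S).toReal * |Ax - Ay| ≤
      (∫ w in S, |f w - Ax|) + ∫ w in S, |f w - Ay| := by
    have hconst : ∫ (_ : E) in S, (Ax - Ay) = (volume S).toReal * (Ax - Ay) := by
      rw [setIntegral_const, smul_eq_mul]; rfl
    have h1 : IntegrableOn (fun w => Ax - f w) S volume :=
      hintSx.neg.congr (Filter.Eventually.of_forall fun w => by simp [neg_sub])
    have hsplit : ∫ (w : E) in S, (Ax - Ay) =
        (∫ w in S, (Ax - f w)) + ∫ w in S, (f w - Ay) := by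
      rw [← integral_add h1 hintSy]
      exact integral_congr_ae (Filter.Eventually.of_forall fun w => by ring)
    calc (volume S).toReal * |Ax - Ay| = |∫ (_ : E) in S, (Ax - Ay)| := by
          rw [hconst, abs_mul, abs_of_nonneg hvS_pos.le]
      _ = |(∫ w in S, (Ax - f w)) + ∫ w in S, (f w - Ay)| := by rw [hsplit]
      _ ≤ |∫ w in S, (Ax - f w)| + |∫ w in S, (f w - Ay)| := abs_add_le _ _
      _ ≤ (∫ w in S, |Ax - f w|) + ∫ w in S, |f w - Ay| := by
          have hax : |∫ w in S, (Ax - f w)| ≤ ∫ w in S, |Ax - f w| := by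
            simpa [Real.norm_eq_abs] using
              norm_integral_le_integral_norm (μ := volume.restrict S) (fun w => Ax - f w)
          have hay : |∫ w in S, (f w - Ay)| ≤ ∫ w in S, |f w - Ay| := by
            simpa [Real.norm_eq_abs] using
              norm_integral_le_integral_norm (μ := volume.restrict S) (fun w => f w - Ay)
          exact add_le_add hax hay
      _ = (∫ w in S, |f w - Ax|) + ∫ w in S, |f w - Ay| := by
          congr 1
          exact integral_congr_ae (Filter.Eventually.of_forall fun w => abs_sub_comm _ _)
  -- enlarge domains and apply key estimate
  have hmono : ∀ (z : E) (A : ℝ), Metric.ball z R ⊆ Ω → S ⊆ Metric.ball z R →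
      (hI : IntegrableOn (fun w => f w - A) (Metric.ball z R) volume) →
      ∫ w in S, |f w - A| ≤ ∫ w in Metric.ball z R, |f w - A| := by
    intro z A hbz hSz hI
    apply setIntegral_mono_set hI.abs
      (Filter.Eventually.of_forall fun w => abs_nonneg _)
      (HasSubset.Subset.eventuallyLE hSz)
  have hmain : (volume S).toReal * |Ax - Ay| ≤
      2 * (Real.sqrt cd * Real.sqrt C * R ^ d / M ^ α) := by
    calc (volume S).toReal * |Ax - Ay| ≤
        (∫ w in S, |f w - Ax|) + ∫ w in S, |f w - Ay| := htri
      _ ≤ (∫ w in Metric.ball x R, |f w - Ax|) + ∫ w in Metric.ball y R, |f w - Ay| := by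
          exact add_le_add (hmono x Ax hbx hSx hintx) (hmono y Ay hby hSy hinty)
      _ ≤ (Real.sqrt cd * Real.sqrt C * R ^ d / M ^ α) +
          (Real.sqrt cd * Real.sqrt C * R ^ d / M ^ α) := by
          gcongr
          · exact key x hx hbx
          · exact key y hy hby
      _ = 2 * (Real.sqrt cd * Real.sqrt C * R ^ d / M ^ α) := by ring
  -- final numerics
  have hMα : (0:ℝ) < M ^ α := Real.rpow_pos_of_pos hM_pos α
  have hLα : (0:ℝ) < L ^ α := Real.rpow_pos_of_pos (by linarith) α
  have hstep : |Ax - Ay| ≤ 2^(d+1) * Real.sqrt (C / cd) / M ^ α := by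
    have key_eq : ∀ a b mα rd c2 : ℝ, 0 < a → 0 < mα → 0 < rd → a * a = c2 →
        2 * (a * b * (2^d * rd) / mα) / (rd * c2) = 2^(d+1) * (b / a) / mα := by
      intro a b mα rd c2 ha hmα hrd haa
      rw [← haa]
      field_simp
      ring
    rw [← le_div_iff₀' hvS_pos] at hmain
    rw [hvS] at hmain
    refine hmain.trans (le_of_eq ?_)
    have h1 : R ^ d = 2^d * r^d := by rw [hR_def, mul_pow]
    rw [h1, Real.sqrt_div hC.le]
    exact key_eq (Real.sqrt cd) (Real.sqrt C) (M ^ α) (r ^ d) cd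
      (Real.sqrt_pos.2 hcd) hMα (by positivity) (Real.mul_self_sqrt hcd.le)
  have hrpow : L ^ α ≤ 2 ^ α * M ^ α := by
    calc L ^ α ≤ (2 * M) ^ α := Real.rpow_le_rpow (by linarith) hML hα0
      _ = 2 ^ α * M ^ α := Real.mul_rpow (by norm_num) hM_pos.le
  have hfinal : 2^(d+1) * Real.sqrt (C / cd) / M ^ α ≤
      2^(d+1) * (2:ℝ)^α * Real.sqrt (C / cd) / L ^ α := by
    rw [div_le_div_iff₀ hMα hLα]
    have hs : (0:ℝ) ≤ Real.sqrt (C / cd) := Real.sqrt_nonneg _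
    have h2d : (0:ℝ) < 2^(d+1) := by positivity
    calc 2^(d+1) * Real.sqrt (C / cd) * L ^ α
        ≤ 2^(d+1) * Real.sqrt (C / cd) * (2 ^ α * M ^ α) := by
          exact mul_le_mul_of_nonneg_left hrpow (by positivity)
      _ = 2^(d+1) * (2:ℝ)^α * Real.sqrt (C / cd) * M ^ α := by ring
  exact hstep.trans hfinal
end
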